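/- arXiv:1807.02973 — 12 statements merged into one kernel-verified Lean document; each statement's English description precedes it below -/
import Mathlib

section
/- Let N = (P, T, Pre, Post, m₀) be a marked Petri net and let t ∈ T be a redundant transition, i.e., there exists a firing sequence σ consisting only of transitions in T ∖ {t} such that Δ(σ) = Δ(t) and σ is firable from the marking Pre(t). Let N' = (P, T ∖ {t}, Pre, Post, m₀) be the net obtained from N by removing t. Then R(N) = R(N'). -/
/-! Marked Petri nets with places drawn from a type `X` and transitions drawn from a type `T`.
Markings are total functions `X → ℕ`; a marking (valuation) "on a set of places `V`" is a
function that vanishes outside of `V`. -/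

/-- The restriction of a valuation to a set `V` (zero outside `V`). -/
noncomputable def restrictTo {X : Type} (V : Set X) (f : X → ℕ) : X → ℕ :=
  V.indicator f

/-- Valuations on `V`: functions vanishing outside `V`. -/
def ValuationOn {X : Type} (V : Set X) : Set (X → ℕ) :=
  {f | ∀ x, x ∉ V → f x = 0}

/-- Lifting of a set `E` of valuations on `V` to a superset `U` of `V`:
the valuations on `U` whose restriction to `V` lies in `E`. -/
def liftTo {X : Type} (E : Set (X → ℕ)) (V U : Set X) : Set (X → ℕ) :=
  {f | f ∈ ValuationOn U ∧ restrictTo V f ∈ E}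

/-- Projection of a set `E` of valuations to a subset `U`: the restrictions to `U`
of the members of `E`. -/
def projTo {X : Type} (E : Set (X → ℕ)) (U : Set X) : Set (X → ℕ) :=
  (restrictTo U) '' E

/-- A marked Petri net `N = (P, T, Pre, Post, m₀)`. The set of places is `N.places ⊆ X`
and the set of transitions is `N.trans ⊆ T`. -/
structure PNet (X T : Type) where
  places : Set X
  trans : Set T
  Pre : T → X → ℕ
  Post : T → X → ℕ
  m0 : X → ℕ

namespace PNet

variable {X T : Type}

/-- Well-formedness: the sets of places and transitions are finite, and the initial
marking as well as the pre/post-conditions of the transitions vanish outside the places. -/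
def WF (N : PNet X T) : Prop :=
  N.places.Finite ∧ N.trans.Finite ∧
    (∀ x, x ∉ N.places → N.m0 x = 0) ∧
    (∀ t ∈ N.trans, ∀ x, x ∉ N.places → N.Pre t x = 0 ∧ N.Post t x = 0)

/-- A transition `t` is enabled at marking `m` if `m ≥ Pre(t)` pointwise. -/
def Enabled (N : PNet X T) (t : T) (m : X → ℕ) : Prop :=
  t ∈ N.trans ∧ ∀ x, N.Pre t x ≤ m x

/-- The marking obtained by firing `t` at `m` : `m - Pre(t) + Post(t)`. -/
def fire (N : PNet X T) (t : T) (m : X → ℕ) : X → ℕ :=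
  fun x => m x - N.Pre t x + N.Post t x

/-- One-step firing relation between markings. -/
def Step (N : PNet X T) (m m' : X → ℕ) : Prop :=
  ∃ t, N.Enabled t m ∧ m' = N.fire t m

/-- The reachability set (state space) `R(N)`: all markings reachable from `m₀`. -/
def R (N : PNet X T) : Set (X → ℕ) :=
  {m | Relation.ReflTransGen N.Step N.m0 m}

/-- `FireSeq N m σ m'` : the firing sequence `σ` can be fired from `m`, yielding `m'`. -/
def FireSeq (N : PNet X T) : (X → ℕ) → List T → (X → ℕ) → Prop
  | m, [], m' => m' = m
  | m, t :: σ, m' => N.Enabled t m ∧ FireSeq N (N.fire t m) σ m'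

/-- The sequence `σ` is firable from the marking `m`. -/
def Firable (N : PNet X T) (m : X → ℕ) (σ : List T) : Prop :=
  ∃ m', N.FireSeq m σ m'

/-- Displacement `Δ(t) = Post(t) - Pre(t) : P → ℤ` of a transition. -/
def delta (N : PNet X T) (t : T) : X → ℤ :=
  fun x => (N.Post t x : ℤ) - (N.Pre t x : ℤ)

/-- Displacement `Δ(σ)` of a firing sequence. -/
def deltaSeq (N : PNet X T) (σ : List T) : X → ℤ :=
  fun x => (σ.map (fun t => N.delta t x)).sum

/-- `t` is a redundant transition witnessed by the sequence `σ`: `σ` avoids `t`,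
has the same displacement as `t`, and is firable from the marking `Pre(t)`
(i.e. `H(t) ≥ H(σ)`). -/
def RedundantTransition (N : PNet X T) (t : T) (σ : List T) : Prop :=
  t ∈ N.trans ∧ (∀ u ∈ σ, u ∈ N.trans ∧ u ≠ t) ∧
    N.deltaSeq σ = N.delta t ∧ N.Firable (N.Pre t) σ

/-- The net obtained by removing transition `t`. -/
def removeTrans (N : PNet X T) (t : T) : PNet X T :=
  { N with trans := N.trans \ {t} }

/-- `p` is a redundant place, witnessed by the set of places `I ⊆ P ∖ {p}`, the
valuation `v` (positive on `I ∪ {p}`) and the constant `b`. -/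
def RedundantPlace (N : PNet X T) (p : X) (I : Finset X) (v : X → ℕ) (b : ℕ) : Prop :=
  p ∈ N.places ∧ ↑I ⊆ N.places \ {p} ∧ v p ≠ 0 ∧ (∀ q ∈ I, v q ≠ 0) ∧
    ((b : ℤ) = (v p : ℤ) * (N.m0 p : ℤ) - ∑ q ∈ I, (v q : ℤ) * (N.m0 q : ℤ)) ∧
    (∀ t ∈ N.trans,
      (v p : ℤ) * (N.Pre t p : ℤ) - ∑ q ∈ I, (v q : ℤ) * (N.Pre t q : ℤ) ≤ (b : ℤ)) ∧
    (∀ t ∈ N.trans,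
      (v p : ℤ) * ((N.Post t p : ℤ) - (N.Pre t p : ℤ))
        = ∑ q ∈ I, (v q : ℤ) * ((N.Post t q : ℤ) - (N.Pre t q : ℤ)))

/-- The net obtained by removing place `p` (restriction to `P ∖ {p}`). -/
noncomputable def removePlace (N : PNet X T) (p : X) : PNet X T where
  places := N.places \ {p}
  trans := N.trans
  Pre := fun t => restrictTo (N.places \ {p}) (N.Pre t)
  Post := fun t => restrictTo (N.places \ {p}) (N.Post t)
  m0 := restrictTo (N.places \ {p}) N.m0

/-- Place `a` is the sum of places `p` and `q`, written `a = p ⊞ q`. -/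
def IsSumPlace (N : PNet X T) (a p q : X) : Prop :=
  N.m0 a = N.m0 p + N.m0 q ∧
    ∀ t ∈ N.trans, N.Pre t a = N.Pre t p + N.Pre t q ∧ N.Post t a = N.Post t p + N.Post t q

/-- Places `p` and `q` are chain-agglomerable, witnessed by the transition `t`. -/
def ChainAgglomerable (N : PNet X T) (p q : X) (t : T) : Prop :=
  p ∈ N.places ∧ q ∈ N.places ∧ p ≠ q ∧ t ∈ N.trans ∧
    N.Pre t p = 1 ∧ (∀ r, r ≠ p → N.Pre t r = 0) ∧
    N.Post t q = 1 ∧ (∀ r, r ≠ q → N.Post t r = 0) ∧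
    (∀ t' ∈ N.trans, t' ≠ t → N.Post t' q = 0) ∧
    N.m0 q = 0

/-- Agglomeration of the set of places `A` as the fresh place `a`: the places become
`(P ∖ A) ∪ {a}`, the place `a` behaves as the sum of the places of `A`, and everything
else is unchanged. -/
noncomputable def agglom [DecidableEq X] (N : PNet X T) (A : Finset X) (a : X) : PNet X T where
  places := (N.places \ ↑A) ∪ {a}
  trans := N.trans
  Pre := fun u => Function.update (restrictTo (N.places \ ↑A) (N.Pre u)) a (∑ x ∈ A, N.Pre u x)
  Post := fun u => Function.update (restrictTo (N.places \ ↑A) (N.Post u)) a (∑ x ∈ A, N.Post u x)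
  m0 := Function.update (restrictTo (N.places \ ↑A) N.m0) a (∑ x ∈ A, N.m0 x)

/-- `(p, t)` is a source-sink pair. -/
def SourceSink (N : PNet X T) (p : X) (t : T) : Prop :=
  p ∈ N.places ∧ t ∈ N.trans ∧
    (∀ u ∈ N.trans, N.Post u p = 0) ∧
    (∀ u ∈ N.trans, u ≠ t → N.Pre u p = 0) ∧
    N.Pre t p = 1 ∧ (∀ r, r ≠ p → N.Pre t r = 0) ∧
    (∀ r, N.Post t r = 0)

/-- The net obtained by removing the source-sink pair `(p, t)`. -/
noncomputable def removeSourceSink (N : PNet X T) (p : X) (t : T) : PNet X T where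
  places := N.places \ {p}
  trans := N.trans \ {t}
  Pre := fun u => restrictTo (N.places \ {p}) (N.Pre u)
  Post := fun u => restrictTo (N.places \ {p}) (N.Post u)
  m0 := restrictTo (N.places \ {p}) N.m0

end PNet

/-- `(N₁, (W, S), N₂)` is a net-abstraction:
`R(N₁) = ((R(N₂) ↑ V) ∩ (S ↑ V)) ↓ P₁` where `V = W ∪ P₁ ∪ P₂`. -/
def NetAbstraction {X T₁ T₂ : Type} (N₁ : PNet X T₁) (W : Set X) (S : Set (X → ℕ))
    (N₂ : PNet X T₂) : Prop :=
  N₁.R = projTo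
    (liftTo N₂.R N₂.places (W ∪ N₁.places ∪ N₂.places) ∩
      liftTo S W (W ∪ N₁.places ∪ N₂.places))
    N₁.places

namespace PNet

private lemma fireSeq_to_rtg {X T : Type} (N : PNet X T) :
    ∀ (σ : List T) (m m' : X → ℕ), N.FireSeq m σ m' → Relation.ReflTransGen N.Step m m' := by
  intro σ
  induction σ with
  | nil => intro m m' h; cases h; exact Relation.ReflTransGen.refl
  | cons t σ ih =>
    intro m m' h
    obtain ⟨hen, hrest⟩ := h
    exact Relation.ReflTransGen.head ⟨t, hen, rfl⟩ (ih _ _ hrest)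

private lemma fireSeq_add {X T : Type} (N : PNet X T) (d : X → ℕ) :
    ∀ (σ : List T) (m m' : X → ℕ), N.FireSeq m σ m' →
      N.FireSeq (fun x => m x + d x) σ (fun x => m' x + d x) := by
  intro σ
  induction σ with
  | nil =>
    intro m m' h
    cases h; rfl
  | cons t σ ih =>
    intro m m' h
    obtain ⟨⟨ht, hle⟩, hrest⟩ := h
    refine ⟨⟨ht, fun x => le_trans (hle x) (Nat.le_add_right _ _)⟩, ?_⟩
    have : (fun x => N.fire t m x + d x) = N.fire t (fun x => m x + d x) := by
      funext x
      have := hle x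
      simp only [fire]
      omega
    rw [← this]
    exact ih _ _ hrest

private lemma fireSeq_delta {X T : Type} (N : PNet X T) :
    ∀ (σ : List T) (m m' : X → ℕ), N.FireSeq m σ m' →
      ∀ x, (m' x : ℤ) = (m x : ℤ) + N.deltaSeq σ x := by
  intro σ
  induction σ with
  | nil =>
    intro m m' h x
    cases h; simp [deltaSeq]
  | cons t σ ih =>
    intro m m' h x
    obtain ⟨⟨ht, hle⟩, hrest⟩ := h
    have hx := ih _ _ hrest x
    have h1 := hle x
    simp only [deltaSeq, List.map_cons, List.sum_cons] at *
    rw [hx]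
    simp only [fire, delta]
    push_cast
    omega

private lemma fireSeq_remove {X T : Type} (N : PNet X T) (t : T)
    (σ : List T) (hσ : ∀ u ∈ σ, u ∈ N.trans ∧ u ≠ t) :
    ∀ (m m' : X → ℕ), N.FireSeq m σ m' → (N.removeTrans t).FireSeq m σ m' := by
  induction σ with
  | nil => intro m m' h; exact h
  | cons u σ ih =>
    intro m m' h
    obtain ⟨⟨hu, hle⟩, hrest⟩ := h
    have hut := hσ u (List.mem_cons_self (a := u) (l := σ))
    exact ⟨⟨⟨hut.1, hut.2⟩, hle⟩, ih (fun v hv => hσ v (List.mem_cons_of_mem _ hv)) _ _ hrest⟩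

end PNet

/-- Removing a redundant transition `t` (witnessed by a firing
sequence `σ` over `T ∖ {t}` with `Δ(σ) = Δ(t)` that is firable from `Pre(t)`)
does not change the reachability set. -/
theorem removeRedundantTransition_reach {X T : Type} (N : PNet X T) (t : T) (σ : List T)
    (hred : N.RedundantTransition t σ) :
    N.R = (N.removeTrans t).R := by
  obtain ⟨ht, hσt, hΔ, w, hw⟩ := hred
  ext m
  constructor
  · intro hm
    induction hm with
    | refl => exact Relation.ReflTransGen.refl
    | tail _ hstep ih =>
      rename_i b c _
      obtain ⟨u, ⟨hu, hle⟩, hc⟩ := hstep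
      by_cases hut : u = t
      · subst hut
        -- simulate by σ
        have hadd := N.fireSeq_add (fun x => b x - N.Pre u x) σ _ _ hw
        have key : (fun x => w x + (b x - N.Pre u x)) = N.fire u b := by
          funext x
          have hδ := N.fireSeq_delta σ _ _ hw x
          rw [hΔ] at hδ
          have h1 := hle x
          simp only [PNet.delta] at hδ
          simp only [PNet.fire]
          omega
        have hpre : (fun x => N.Pre u x + (b x - N.Pre u x)) = b := by
          funext x; have := hle x; omega
        rw [hpre, key] at hadd
        have hrem := N.fireSeq_remove u σ hσt _ _ hadd
        rw [hc]
        exact ih.trans (PNet.fireSeq_to_rtg _ σ _ _ hrem)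
      · exact ih.tail ⟨u, ⟨⟨hu, hut⟩, hle⟩, hc⟩
  · intro hm
    induction hm with
    | refl => exact Relation.ReflTransGen.refl
    | tail _ hstep ih =>
      obtain ⟨u, ⟨⟨hu, _⟩, hle⟩, hc⟩ := hstep
      exact ih.tail ⟨u, ⟨hu, hle⟩, hc⟩
end

section
/- Let N = (P, T, Pre, Post, m₀) be a marked Petri net and let t, t' ∈ T with t ≠ t' be such that Δ(t) = Δ(t') (i.e., Post(t)(p) − Pre(t)(p) = Post(t')(p) − Pre(t')(p) for all p ∈ P, as integers) and Pre(t)(p) ≥ Pre(t')(p) for all p ∈ P (t is a duplicate of t'). Let N' = (P, T ∖ {t}, Pre, Post, m₀) be the net obtained from N by removing t. Then R(N) = R(N'). -/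
/-- Removing a duplicate transition `t` of `t'`
(`Δ(t) = Δ(t')` and `Pre(t) ≥ Pre(t')`) does not change the reachability set. -/
theorem removeDuplicateTransition_reach {X T : Type} (N : PNet X T) (t t' : T)
    (ht : t ∈ N.trans) (ht' : t' ∈ N.trans) (hne : t ≠ t')
    (hdelta : ∀ p, (N.Post t p : ℤ) - (N.Pre t p : ℤ) = (N.Post t' p : ℤ) - (N.Pre t' p : ℤ))
    (hpre : ∀ p, N.Pre t' p ≤ N.Pre t p) :
    N.R = (N.removeTrans t).R := by
  have hstep : ∀ m m', N.Step m m' → (N.removeTrans t).Step m m' := by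
    rintro m m' ⟨u, ⟨hu, hen⟩, rfl⟩
    by_cases hut : u = t
    · subst hut
      refine ⟨t', ⟨⟨ht', fun h => hne h.symm⟩, fun x => le_trans (hpre x) (hen x)⟩, ?_⟩
      funext x
      have h1 := hdelta x
      have h2 := hpre x
      have h3 := hen x
      simp only [PNet.fire, PNet.removeTrans]
      omega
    · exact ⟨u, ⟨⟨hu, hut⟩, hen⟩, rfl⟩
  have hstep' : ∀ m m', (N.removeTrans t).Step m m' → N.Step m m' := by
    rintro m m' ⟨u, ⟨⟨hu, _⟩, hen⟩, rfl⟩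
    exact ⟨u, ⟨hu, hen⟩, rfl⟩
  ext m
  constructor
  · intro h
    exact Relation.ReflTransGen.mono hstep _ _ h
  · intro h
    exact Relation.ReflTransGen.mono hstep' _ _ h
end

section
/- Let N = (P, T, Pre, Post, m₀) be a marked Petri net and let p ∈ P be a redundant place with witnesses I ⊆ P ∖ {p}, v : I ∪ {p} → ℕ ∖ {0} and b ∈ ℕ. Then every reachable marking m ∈ R(N) satisfies v(p)·m(p) = Σ_{q∈I} v(q)·m(q) + b. -/
/-- Every reachable marking `m` of a net with a redundant place `p`
(witnessed by `I`, `v`, `b`) satisfies the marking equation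
`v(p)·m(p) = Σ_{q ∈ I} v(q)·m(q) + b`. -/
theorem redundantPlace_marking_equation {X T : Type} (N : PNet X T) (p : X)
    (I : Finset X) (v : X → ℕ) (b : ℕ) (hred : N.RedundantPlace p I v b) :
    ∀ m ∈ N.R, v p * m p = (∑ q ∈ I, v q * m q) + b := by
  obtain ⟨-, -, -, -, h0, -, h3⟩ := hred
  intro m hm
  have key : (v p : ℤ) * (m p : ℤ) = (∑ q ∈ I, (v q : ℤ) * (m q : ℤ)) + b := by
    induction hm with
    | refl =>
      push_cast
      linarith [h0]
    | tail hrt step ih =>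
      rename_i m₁ m₂
      obtain ⟨t, ⟨ht, hen⟩, rfl⟩ := step
      have hfire : ∀ x, ((N.fire t m₁ x : ℤ)) = (m₁ x : ℤ) - N.Pre t x + N.Post t x := by
        intro x
        have := hen x
        simp [PNet.fire]
        omega
      have hdiff := h3 t ht
      calc (v p : ℤ) * (N.fire t m₁ p : ℤ)
          = (v p : ℤ) * (m₁ p : ℤ) + (v p : ℤ) * ((N.Post t p : ℤ) - (N.Pre t p : ℤ)) := by
            rw [hfire p]; ring
        _ = (∑ q ∈ I, (v q : ℤ) * (m₁ q : ℤ)) + b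
              + ∑ q ∈ I, (v q : ℤ) * ((N.Post t q : ℤ) - (N.Pre t q : ℤ)) := by
            rw [ih, hdiff]
        _ = (∑ q ∈ I, (v q : ℤ) * (N.fire t m₁ q : ℤ)) + b := by
            have hs : ∑ q ∈ I, (v q : ℤ) * (N.fire t m₁ q : ℤ)
                = ∑ q ∈ I, ((v q : ℤ) * (m₁ q : ℤ)
                    + (v q : ℤ) * ((N.Post t q : ℤ) - (N.Pre t q : ℤ))) :=
              Finset.sum_congr rfl (fun q _ => by rw [hfire q]; ring)
            rw [hs, Finset.sum_add_distrib]; ring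
  have : ((v p * m p : ℕ) : ℤ) = ((∑ q ∈ I, v q * m q) + b : ℕ) := by
    push_cast
    linarith [key]
  exact_mod_cast this
end

section
/- Let N = (P, T, Pre, Post, m₀) be a marked Petri net, let p ∈ P be a redundant place with witnesses I ⊆ P ∖ {p}, v : I ∪ {p} → ℕ ∖ {0} and b ∈ ℕ, and let N' = (P ∖ {p}, T, Pre', Post', m₀') be the net obtained from N by removing p. Write k = v(p) and, for a marking m : P ∖ {p} → ℕ, ρ(m) = Σ_{q∈I} v(q)·m(q) + b. Then: (i) for every m ∈ R(N'), k divides ρ(m) and the marking on P extending m with p ↦ ρ(m)/k belongs to R(N); and (ii) for every m' ∈ R(N), the restriction of m' to P ∖ {p} belongs to R(N'). In particular, for every marking m : P ∖ {p} → ℕ, the extension of m by p ↦ ρ(m)/k belongs to R(N) if and only if m ∈ R(N'). -/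
/-- Removing a redundant place `p` (witnessed by `I`, `v`, `b`):
with `k = v(p)` and `ρ(m) = Σ_{q ∈ I} v(q)·m(q) + b`,
(i) every `m ∈ R(N')` satisfies `k ∣ ρ(m)` and its extension by `p ↦ ρ(m)/k` is in `R(N)`;
(ii) the restriction to `P ∖ {p}` of every `m' ∈ R(N)` is in `R(N')`; and in particular,
for every marking `m` on `P ∖ {p}`, the extension of `m` by `p ↦ ρ(m)/k` belongs to
`R(N)` iff `m ∈ R(N')`. -/
theorem removeRedundantPlace_reach {X T : Type} [DecidableEq X] (N : PNet X T) (hwf : N.WF)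
    (p : X) (I : Finset X) (v : X → ℕ) (b : ℕ) (hred : N.RedundantPlace p I v b) :
    (∀ m ∈ (N.removePlace p).R,
        v p ∣ ((∑ q ∈ I, v q * m q) + b) ∧
          Function.update m p (((∑ q ∈ I, v q * m q) + b) / v p) ∈ N.R) ∧
    (∀ m' ∈ N.R, restrictTo (N.places \ {p}) m' ∈ (N.removePlace p).R) ∧
    (∀ m ∈ ValuationOn (N.places \ {p}),
        (Function.update m p (((∑ q ∈ I, v q * m q) + b) / v p) ∈ N.R
          ↔ m ∈ (N.removePlace p).R)) := by
  obtain ⟨hpP, hIP, hk, hvI, hb, hpre, hdelta⟩ := hred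
  obtain ⟨hPfin, hTfin, hm0, hPP⟩ := hwf
  have hkpos : 0 < v p := Nat.pos_of_ne_zero hk
  have hIq : ∀ q ∈ I, q ∈ N.places \ {p} := fun q hq => hIP hq
  have hqne : ∀ q ∈ I, q ≠ p := fun q hq => (hIq q hq).2
  have hres : ∀ (f : X → ℕ) (x : X), x ∈ N.places → x ≠ p →
      restrictTo (N.places \ {p}) f x = f x := by
    intro f x h1 h2
    exact Set.indicator_of_mem (Set.mem_diff_singleton.mpr ⟨h1, h2⟩) f
  have hres0 : ∀ (f : X → ℕ) (x : X), x ∉ N.places →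
      restrictTo (N.places \ {p}) f x = 0 := by
    intro f x h
    exact Set.indicator_of_notMem (fun hc => h hc.1) f
  -- Part (ii): restriction of reachable markings
  have hA : ∀ m' ∈ N.R, restrictTo (N.places \ {p}) m' ∈ (N.removePlace p).R := by
    intro m' hm'
    induction hm' with
    | refl => exact Relation.ReflTransGen.refl
    | tail _ s ih =>
      rename_i m₁ m₂ _
      obtain ⟨t, ⟨ht, hen⟩, rfl⟩ := s
      refine Relation.ReflTransGen.tail ih ⟨t, ⟨ht, ?_⟩, ?_⟩
      · intro x
        by_cases hx : x ∈ N.places \ {p} <;>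
          simp [PNet.removePlace, restrictTo, Set.indicator_apply, hx, hen x]
      · funext x
        by_cases hx : x ∈ N.places \ {p} <;>
          simp [PNet.removePlace, PNet.fire, restrictTo, Set.indicator_apply, hx]
  -- Part (i), strengthened
  have hB : ∀ m ∈ (N.removePlace p).R,
      ∃ n, v p * n = (∑ q ∈ I, v q * m q) + b ∧ Function.update m p n ∈ N.R := by
    intro m hm
    induction hm with
    | refl =>
      refine ⟨N.m0 p, ?_, ?_⟩
      · have hm0I : ∀ q ∈ I, (N.removePlace p).m0 q = N.m0 q := by
          intro q hq
          simp [PNet.removePlace, restrictTo, Set.indicator_of_mem (hIq q hq)]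
        have hZ : (v p : ℤ) * (N.m0 p : ℤ)
            = (∑ q ∈ I, (v q : ℤ) * ((N.removePlace p).m0 q : ℤ)) + (b : ℤ) := by
          rw [Finset.sum_congr rfl fun q hq => by rw [hm0I q hq]]
          linarith [hb]
        exact_mod_cast hZ
      · have : Function.update (N.removePlace p).m0 p (N.m0 p) = N.m0 := by
          funext x
          by_cases hx : x = p
          · subst hx; simp
          · rw [Function.update_of_ne hx]
            by_cases hx2 : x ∈ N.places
            · exact hres N.m0 x hx2 hx
            · show restrictTo (N.places \ {p}) N.m0 x = N.m0 x
              rw [hres0 N.m0 x hx2, hm0 x hx2]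
        rw [this]
        exact Relation.ReflTransGen.refl
    | tail _ s ih =>
      rename_i m₁ m₂ _
      obtain ⟨n, hn, hM⟩ := ih
      obtain ⟨t, ⟨ht, hen⟩, rfl⟩ := s
      have hPreI : ∀ q ∈ I, (N.removePlace p).Pre t q = N.Pre t q := by
        intro q hq
        simp [PNet.removePlace, restrictTo, Set.indicator_of_mem (hIq q hq)]
      have hPostI : ∀ q ∈ I, (N.removePlace p).Post t q = N.Post t q := by
        intro q hq
        simp [PNet.removePlace, restrictTo, Set.indicator_of_mem (hIq q hq)]
      -- Pre t p ≤ n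
      have hple : N.Pre t p ≤ n := by
        have h1 : (v p : ℤ) * (N.Pre t p : ℤ)
            ≤ (∑ q ∈ I, (v q : ℤ) * (N.Pre t q : ℤ)) + (b : ℤ) := by
          linarith [hpre t ht]
        have h2 : (∑ q ∈ I, (v q : ℤ) * (N.Pre t q : ℤ))
            ≤ ∑ q ∈ I, (v q : ℤ) * (m₁ q : ℤ) := by
          refine Finset.sum_le_sum fun q hq => ?_
          have := hen q
          rw [hPreI q hq] at this
          have : (N.Pre t q : ℤ) ≤ (m₁ q : ℤ) := by exact_mod_cast this
          nlinarith [Int.ofNat_nonneg (v q)]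
        have h3 : (v p : ℤ) * (N.Pre t p : ℤ) ≤ (v p : ℤ) * (n : ℤ) := by
          have hnZ : (v p : ℤ) * (n : ℤ)
              = (∑ q ∈ I, (v q : ℤ) * (m₁ q : ℤ)) + (b : ℤ) := by exact_mod_cast hn
          linarith
        have hkZ : (0 : ℤ) < (v p : ℤ) := by exact_mod_cast hkpos
        exact_mod_cast le_of_mul_le_mul_left h3 hkZ
      have henN : ∀ x, N.Pre t x ≤ Function.update m₁ p n x := by
        intro x
        by_cases hx : x = p
        · subst hx; simpa using hple
        · rw [Function.update_of_ne hx]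
          by_cases hx2 : x ∈ N.places
          · have := hen x
            rwa [show (N.removePlace p).Pre t x = N.Pre t x from hres (N.Pre t) x hx2 hx]
              at this
          · rw [(hPP t ht x hx2).1]; exact Nat.zero_le _
      refine ⟨n - N.Pre t p + N.Post t p, ?_, ?_⟩
      · -- invariant preserved
        have hfq : ∀ q ∈ I, ((N.removePlace p).fire t m₁ q : ℤ)
            = (m₁ q : ℤ) - (N.Pre t q : ℤ) + (N.Post t q : ℤ) := by
          intro q hq
          have hle : N.Pre t q ≤ m₁ q := by
            have := hen q; rwa [hPreI q hq] at this
          simp only [PNet.fire, hPreI q hq, hPostI q hq]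
          push_cast [Nat.sub_add_cancel, hle]
          omega
        have hnZ : (v p : ℤ) * (n : ℤ)
            = (∑ q ∈ I, (v q : ℤ) * (m₁ q : ℤ)) + (b : ℤ) := by exact_mod_cast hn
        have hgoal : (v p : ℤ) * ((n : ℤ) - (N.Pre t p : ℤ) + (N.Post t p : ℤ))
            = (∑ q ∈ I, (v q : ℤ) * (((N.removePlace p).fire t m₁) q : ℤ)) + (b : ℤ) := by
          have hs : ∑ q ∈ I, (v q : ℤ) * (((N.removePlace p).fire t m₁) q : ℤ)
              = (∑ q ∈ I, (v q : ℤ) * (m₁ q : ℤ))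
                + ∑ q ∈ I, (v q : ℤ) * ((N.Post t q : ℤ) - (N.Pre t q : ℤ)) := by
            rw [← Finset.sum_add_distrib]
            refine Finset.sum_congr rfl fun q hq => ?_
            rw [hfq q hq]; ring
          rw [hs, ← hdelta t ht]
          linarith
        have hcast : ((n - N.Pre t p + N.Post t p : ℕ) : ℤ)
            = (n : ℤ) - (N.Pre t p : ℤ) + (N.Post t p : ℤ) := by
          push_cast [Nat.sub_add_cancel, hple]; omega
        have := hgoal
        rw [← hcast] at this
        exact_mod_cast this
      · refine Relation.ReflTransGen.tail hM ⟨t, ⟨ht, henN⟩, ?_⟩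
        funext x
        by_cases hx : x = p
        · subst hx
          simp [PNet.fire]
        · rw [Function.update_of_ne hx]
          by_cases hx2 : x ∈ N.places
          · show m₁ x - restrictTo (N.places \ {p}) (N.Pre t) x
                + restrictTo (N.places \ {p}) (N.Post t) x
                = Function.update m₁ p n x - N.Pre t x + N.Post t x
            rw [hres (N.Pre t) x hx2 hx, hres (N.Post t) x hx2 hx, Function.update_of_ne hx]
          · show m₁ x - restrictTo (N.places \ {p}) (N.Pre t) x
                + restrictTo (N.places \ {p}) (N.Post t) x
                = Function.update m₁ p n x - N.Pre t x + N.Post t x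
            rw [hres0 (N.Pre t) x hx2, hres0 (N.Post t) x hx2, (hPP t ht x hx2).1,
              (hPP t ht x hx2).2, Function.update_of_ne hx]
  refine ⟨?_, hA, ?_⟩
  · intro m hm
    obtain ⟨n, hn, hM⟩ := hB m hm
    refine ⟨⟨n, hn.symm⟩, ?_⟩
    have : ((∑ q ∈ I, v q * m q) + b) / v p = n := by
      rw [← hn, Nat.mul_div_cancel_left _ hkpos]
    rwa [this]
  · intro m hmV
    constructor
    · intro hM
      have := hA _ hM
      have hres : restrictTo (N.places \ {p})
          (Function.update m p (((∑ q ∈ I, v q * m q) + b) / v p)) = m := by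
        funext x
        by_cases hx : x ∈ N.places \ {p}
        · have hxp : x ≠ p := hx.2
          simp [restrictTo, Set.indicator_of_mem hx, Function.update_of_ne hxp]
        · simp [restrictTo, Set.indicator_apply, hx, (hmV x hx).symm]
      rwa [hres] at this
    · intro hm
      obtain ⟨n, hn, hM⟩ := hB m hm
      have : ((∑ q ∈ I, v q * m q) + b) / v p = n := by
        rw [← hn, Nat.mul_div_cancel_left _ hkpos]
      rwa [this]
end

section
/- Let N = (P, T, Pre, Post, m₀) be a marked Petri net, let p, q ∈ P be distinct places, and let N⁺ be the net obtained from N by adding a fresh place a with a = p ⊞ q (i.e., N⁺ has places P ∪ {a}, the same transitions, m₀⁺(a) = m₀(p) + m₀(q), Pre⁺(t)(a) = Pre(t)(p) + Pre(t)(q) and Post⁺(t)(a) = Post(t)(p) + Post(t)(q) for every t ∈ T, everything else unchanged). Then: (i) a firing sequence σ over T is firable from m₀ in N if and only if it is firable from m₀⁺ in N⁺; and (ii) every reachable marking m ∈ R(N⁺) satisfies m(a) = m(p) + m(q). -/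
/-- The net `N⁺` obtained from `N` by adding a fresh place `a` with `a = p ⊞ q`. -/
def PNet.addSumPlace {X T : Type} [DecidableEq X] (N : PNet X T) (p q a : X) : PNet X T where
  places := N.places ∪ {a}
  trans := N.trans
  Pre := fun t => Function.update (N.Pre t) a (N.Pre t p + N.Pre t q)
  Post := fun t => Function.update (N.Post t) a (N.Post t p + N.Post t q)
  m0 := Function.update N.m0 a (N.m0 p + N.m0 q)

/-- Adding a fresh place `a = p ⊞ q`:
(i) a firing sequence is firable from `m₀` in `N` iff it is firable from `m₀⁺` in `N⁺`;
(ii) every reachable marking `m` of `N⁺` satisfies `m(a) = m(p) + m(q)`. -/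
theorem addSumPlace_firable_and_invariant {X T : Type} [DecidableEq X] (N : PNet X T)
    (hwf : N.WF) (p q a : X) (hpq : p ≠ q)
    (hpP : p ∈ N.places) (hqP : q ∈ N.places) (ha : a ∉ N.places) :
    (∀ σ : List T, N.Firable N.m0 σ ↔
        (N.addSumPlace p q a).Firable (N.addSumPlace p q a).m0 σ) ∧
    (∀ m ∈ (N.addSumPlace p q a).R, m a = m p + m q) := by
  set N' := N.addSumPlace p q a with hN'
  have hpa : p ≠ a := fun h => ha (h ▸ hpP)
  have hqa : q ≠ a := fun h => ha (h ▸ hqP)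
  have hPre0 : ∀ t ∈ N.trans, N.Pre t a = 0 := fun t ht =>
    (hwf.2.2.2 t ht a ha).1
  have hPost0 : ∀ t ∈ N.trans, N.Post t a = 0 := fun t ht =>
    (hwf.2.2.2 t ht a ha).2
  -- G lifts a marking of N to a marking of N'
  set G : (X → ℕ) → (X → ℕ) := fun m => Function.update m a (m p + m q) with hG
  have hGa : ∀ m, G m a = m p + m q := fun m => Function.update_self _ _ _
  have hGx : ∀ m x, x ≠ a → G m x = m x := fun m x hx => Function.update_of_ne hx _ _
  have hm0 : N'.m0 = G N.m0 := rfl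
  have hEn : ∀ t m, N.Enabled t m ↔ N'.Enabled t (G m) := by
    intro t m
    constructor
    · rintro ⟨ht, hle⟩
      refine ⟨ht, fun x => ?_⟩
      by_cases hx : x = a
      · subst hx
        simp only [hN', PNet.addSumPlace, Function.update_self, hGa]
        exact Nat.add_le_add (hle p) (hle q)
      · simp only [hN', PNet.addSumPlace, Function.update_of_ne hx, hGx m x hx]
        exact hle x
    · rintro ⟨ht, hle⟩
      refine ⟨ht, fun x => ?_⟩
      by_cases hx : x = a
      · subst hx; rw [hPre0 t ht]; exact Nat.zero_le _
      · have := hle x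
        simpa only [hN', PNet.addSumPlace, Function.update_of_ne hx, hGx m x hx] using this
  have hfire : ∀ t m, N.Enabled t m → N'.fire t (G m) = G (N.fire t m) := by
    intro t m ⟨ht, hle⟩
    funext x
    by_cases hx : x = a
    · rw [hx]
      have h1 := hle p; have h2 := hle q
      simp only [PNet.fire, hN', PNet.addSumPlace, Function.update_self, hGa]
      omega
    · simp only [PNet.fire, hN', PNet.addSumPlace, Function.update_of_ne hx, hGx m x hx,
        hGx (N.fire t m) x hx]
  have hFS : ∀ σ m, N.Firable m σ ↔ N'.Firable (G m) σ := by
    intro σ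
    induction σ with
    | nil => intro m; exact ⟨fun _ => ⟨G m, rfl⟩, fun _ => ⟨m, rfl⟩⟩
    | cons t σ ih =>
      intro m
      constructor
      · rintro ⟨m', hen, hfs⟩
        obtain ⟨m'', hfs'⟩ := (ih (N.fire t m)).1 ⟨m', hfs⟩
        exact ⟨m'', (hEn t m).1 hen, by rw [hfire t m hen]; exact hfs'⟩
      · rintro ⟨m', hen, hfs⟩
        have hen' : N.Enabled t m := (hEn t m).2 hen
        rw [hfire t m hen'] at hfs
        obtain ⟨m'', hfs'⟩ := (ih (N.fire t m)).2 ⟨m', hfs⟩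
        exact ⟨m'', hen', hfs'⟩
  constructor
  · intro σ; rw [hm0]; exact hFS σ N.m0
  · intro m hm
    induction hm with
    | refl =>
      show N'.m0 a = N'.m0 p + N'.m0 q
      rw [hm0, hGa, hGx N.m0 p hpa, hGx N.m0 q hqa]
    | tail _ hstep ih =>
      obtain ⟨t, ⟨ht, hle⟩, rfl⟩ := hstep
      rename_i m' _
      have hPa : N'.Pre t a = N.Pre t p + N.Pre t q := Function.update_self _ _ _
      have hPp : N'.Pre t p = N.Pre t p := Function.update_of_ne hpa _ _
      have hPq : N'.Pre t q = N.Pre t q := Function.update_of_ne hqa _ _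
      have hQa : N'.Post t a = N.Post t p + N.Post t q := Function.update_self _ _ _
      have hQp : N'.Post t p = N.Post t p := Function.update_of_ne hpa _ _
      have hQq : N'.Post t q = N.Post t q := Function.update_of_ne hqa _ _
      have h1 := hle p; have h2 := hle q; have h3 := hle a
      simp only [PNet.fire, hPa, hPp, hPq, hQa, hQp, hQq] at *
      omega
end

section
/- Let N = (P, T, Pre, Post, m₀) be a marked Petri net with chain-agglomerable places p, q ∈ P, and let N' be their chain agglomeration with new place a. Then for every marking m : P ∖ {p, q} → ℕ and every x ∈ ℕ: if the marking on (P ∖ {p, q}) ∪ {a} extending m with a ↦ x belongs to R(N'), then the marking on P extending m with p ↦ x and q ↦ 0 belongs to R(N). -/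
private lemma reach_fire {X T : Type} (N : PNet X T) {m : X → ℕ} (hm : m ∈ N.R)
    {t : T} (h : N.Enabled t m) : N.fire t m ∈ N.R :=
  Relation.ReflTransGen.tail hm ⟨t, h, rfl⟩

/-- Firing `t` (which moves one token from `p` to `q`) `k` times. -/
private lemma move_tokens {X T : Type} [DecidableEq X] (N : PNet X T) {p q : X} {t : T}
    (hpq : p ≠ q) (ht : t ∈ N.trans)
    (hPretp : N.Pre t p = 1) (hPret0 : ∀ r, r ≠ p → N.Pre t r = 0)
    (hPosttq : N.Post t q = 1) (hPostt0 : ∀ r, r ≠ q → N.Post t r = 0)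
    {M : X → ℕ} (hM : M ∈ N.R) :
    ∀ k, k ≤ M p →
      Function.update (Function.update M p (M p - k)) q (M q + k) ∈ N.R := by
  intro k
  induction k with
  | zero =>
    intro _
    have : Function.update (Function.update M p (M p - 0)) q (M q + 0) = M := by
      funext r
      by_cases hrq : r = q
      · rw [hrq]; simp
      · by_cases hrp : r = p
        · rw [hrp]; simp [Function.update_of_ne hpq]
        · simp [Function.update_of_ne hrq, Function.update_of_ne hrp]
    rw [this]; exact hM
  | succ k ih =>
    intro hk
    have hMk := ih (le_trans (Nat.le_succ k) hk)
    set Mk := Function.update (Function.update M p (M p - k)) q (M q + k) with hMkdef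
    have hMkp : Mk p = M p - k := by
      simp [hMkdef, Function.update_of_ne hpq]
    have hMkq : Mk q = M q + k := by simp [hMkdef]
    have hen : N.Enabled t Mk := by
      refine ⟨ht, fun r => ?_⟩
      by_cases hrp : r = p
      · rw [hrp, hPretp, hMkp]
        omega
      · rw [hPret0 r hrp]; exact Nat.zero_le _
    have hfire := reach_fire N hMk hen
    have : N.fire t Mk
        = Function.update (Function.update M p (M p - (k + 1))) q (M q + (k + 1)) := by
      funext r
      by_cases hrq : r = q
      · have hqp : q ≠ p := fun h => hpq h.symm
        rw [hrq]
        simp only [PNet.fire, hMkq, hPret0 q hqp, hPosttq, Function.update_self]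
        omega
      · by_cases hrp : r = p
        · rw [hrp]
          simp only [PNet.fire, hMkp, hPretp, hPostt0 p hpq,
            Function.update_of_ne hpq, Function.update_self]
          omega
        · simp only [PNet.fire, hMkdef, hPret0 r hrp, hPostt0 r hrq,
            Function.update_of_ne hrq, Function.update_of_ne hrp]
          omega
    rw [this] at hfire
    exact hfire

/-- The key simulation lemma: every marking reachable in the agglomerated net,
with its token count on `a` transferred to `p` (and `q`, `a` emptied), is reachable
in the original net. -/
private lemma key_sim {X T : Type} [DecidableEq X] (N : PNet X T)
    (hwf : N.WF) (p q : X) (t : T) (hca : N.ChainAgglomerable p q t)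
    (a : X) (ha : a ∉ N.places) :
    ∀ m', m' ∈ (N.agglom {p, q} a).R →
      Function.update (Function.update (Function.update m' a 0) p (m' a)) q 0 ∈ N.R := by
  obtain ⟨hp, hq, hpq, ht, hPretp, hPret0, hPosttq, hPostt0, hnoq, hm0q⟩ := hca
  obtain ⟨-, -, hm0, hprepost⟩ := hwf
  have hpa : p ≠ a := fun h => ha (h ▸ hp)
  have hqa : q ≠ a := fun h => ha (h ▸ hq)
  have hqp : q ≠ p := fun h => hpq h.symm
  have hcoe : (↑({p, q} : Finset X) : Set X) = {p, q} := by simp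
  -- computation of the agglomerated Pre/Post at a place r ∉ {p, q, a}
  have hPre' : ∀ u ∈ N.trans, ∀ r, r ≠ p → r ≠ q → r ≠ a →
      (N.agglom {p, q} a).Pre u r = N.Pre u r := by
    intro u hu r hrp hrq hra
    simp only [PNet.agglom, Function.update_of_ne hra, restrictTo, hcoe]
    by_cases hrP : r ∈ N.places
    · rw [Set.indicator_of_mem (Set.mem_diff_of_mem hrP (by simp [hrp, hrq]))]
    · rw [Set.indicator_of_notMem (fun h => hrP h.1), (hprepost u hu r hrP).1]
  have hPost' : ∀ u ∈ N.trans, ∀ r, r ≠ p → r ≠ q → r ≠ a →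
      (N.agglom {p, q} a).Post u r = N.Post u r := by
    intro u hu r hrp hrq hra
    simp only [PNet.agglom, Function.update_of_ne hra, restrictTo, hcoe]
    by_cases hrP : r ∈ N.places
    · rw [Set.indicator_of_mem (Set.mem_diff_of_mem hrP (by simp [hrp, hrq]))]
    · rw [Set.indicator_of_notMem (fun h => hrP h.1), (hprepost u hu r hrP).2]
  have hPre'a : ∀ u, (N.agglom {p, q} a).Pre u a = N.Pre u p + N.Pre u q := by
    intro u
    simp [PNet.agglom, Finset.sum_pair hpq]
  have hPost'a : ∀ u, (N.agglom {p, q} a).Post u a = N.Post u p + N.Post u q := by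
    intro u
    simp [PNet.agglom, Finset.sum_pair hpq]
  intro m' hm'
  induction hm' with
  | refl =>
    have : Function.update (Function.update
        (Function.update (N.agglom {p, q} a).m0 a 0) p ((N.agglom {p, q} a).m0 a)) q 0
        = N.m0 := by
      funext r
      by_cases hrq : r = q
      · rw [hrq]; simp [hm0q]
      · rw [Function.update_of_ne hrq]
        by_cases hrp : r = p
        · rw [hrp, Function.update_self]
          simp [PNet.agglom, Finset.sum_pair hpq, hm0q]
        · rw [Function.update_of_ne hrp]
          by_cases hra : r = a
          · rw [hra, Function.update_self]
            exact (hm0 a ha).symm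
          · rw [Function.update_of_ne hra]
            simp only [PNet.agglom, Function.update_of_ne hra, restrictTo, hcoe]
            by_cases hrP : r ∈ N.places
            · rw [Set.indicator_of_mem (Set.mem_diff_of_mem hrP (by simp [hrp, hrq]))]
            · rw [Set.indicator_of_notMem (fun h => hrP h.1), hm0 r hrP]
    rw [PNet.R, Set.mem_setOf_eq, this]
  | @tail m' m'' hm' hstep ih =>
    obtain ⟨u, ⟨hu, hen⟩, rfl⟩ := hstep
    have hu' : u ∈ N.trans := hu
    by_cases hut : u = t
    · -- firing t in the agglomerated net does not change the marking
      subst hut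
      have h1 : (1 : ℕ) ≤ m' a := by
        have := hen a
        rwa [hPre'a, hPretp, hPret0 q hqp] at this
      have : (N.agglom {p, q} a).fire u m' = m' := by
        funext r
        by_cases hra : r = a
        · rw [hra]
          simp only [PNet.fire, hPre'a, hPost'a, hPretp, hPret0 q hqp,
            hPosttq, hPostt0 p hpq]
          omega
        · by_cases hrp : r = p
          · rw [hrp]
            simp only [PNet.fire, PNet.agglom, Function.update_of_ne hpa, restrictTo, hcoe]
            rw [Set.indicator_of_notMem (by simp), Set.indicator_of_notMem (by simp)]
            omega
          · by_cases hrq : r = q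
            · rw [hrq]
              simp only [PNet.fire, PNet.agglom, Function.update_of_ne hqa, restrictTo, hcoe]
              rw [Set.indicator_of_notMem (by simp), Set.indicator_of_notMem (by simp)]
              omega
            · simp only [PNet.fire, hPre' u hu r hrp hrq hra, hPost' u hu r hrp hrq hra,
                hPret0 r hrp, hPostt0 r hrq]
              omega
      rw [this]
      exact ih
    · -- u ≠ t : fire t (Pre u q) times from the simulated marking, then fire u
      have hPostuq : N.Post u q = 0 := hnoq u hu' hut
      set M := Function.update (Function.update (Function.update m' a 0) p (m' a)) q 0
        with hMdef
      have hMp : M p = m' a := by simp [hMdef, Function.update_of_ne hpq]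
      have hMq : M q = 0 := by simp [hMdef]
      have hMa : M a = 0 := by
        simp [hMdef, Function.update_of_ne hqa.symm, Function.update_of_ne hpa.symm]
      have hMr : ∀ r, r ≠ p → r ≠ q → r ≠ a → M r = m' r := by
        intro r hrp hrq hra
        simp [hMdef, Function.update_of_ne hrq, Function.update_of_ne hrp,
          Function.update_of_ne hra]
      set k := N.Pre u q with hkdef
      have hka : N.Pre u p + k ≤ m' a := by
        have := hen a
        rwa [hPre'a] at this
      have hkM : k ≤ M p := by rw [hMp]; omega
      have hMk := move_tokens N hpq ht hPretp hPret0 hPosttq hPostt0 ih k hkM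
      set Mk := Function.update (Function.update M p (M p - k)) q (M q + k) with hMkdef
      have hMkp : Mk p = m' a - k := by
        simp [hMkdef, Function.update_of_ne hpq, hMp]
      have hMkq : Mk q = k := by simp [hMkdef, hMq]
      have hMka : Mk a = 0 := by
        simp [hMkdef, Function.update_of_ne hqa.symm, Function.update_of_ne hpa.symm, hMa]
      have hMkr : ∀ r, r ≠ p → r ≠ q → r ≠ a → Mk r = m' r := by
        intro r hrp hrq hra
        rw [hMkdef, Function.update_of_ne hrq, Function.update_of_ne hrp,
          hMr r hrp hrq hra]
      have hPua : N.Pre u a = 0 := (hprepost u hu' a ha).1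
      have hPoua : N.Post u a = 0 := (hprepost u hu' a ha).2
      have henu : N.Enabled u Mk := by
        refine ⟨hu', fun r => ?_⟩
        by_cases hrp : r = p
        · rw [hrp, hMkp]; omega
        · by_cases hrq : r = q
          · rw [hrq, hMkq]
          · by_cases hra : r = a
            · rw [hra, hPua]; exact Nat.zero_le _
            · rw [hMkr r hrp hrq hra]
              have := hen r
              rwa [hPre' u hu r hrp hrq hra] at this
      have hfire := reach_fire N hMk henu
      have heq : N.fire u Mk = Function.update (Function.update
          (Function.update ((N.agglom {p, q} a).fire u m') a 0) p
          (((N.agglom {p, q} a).fire u m') a)) q 0 := by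
        funext r
        by_cases hrq : r = q
        · rw [hrq, Function.update_self]
          simp only [PNet.fire, hMkq, hPostuq]
          omega
        · rw [Function.update_of_ne hrq]
          by_cases hrp : r = p
          · rw [hrp, Function.update_self]
            simp only [PNet.fire, hMkp, hPre'a, hPost'a, hPostuq]
            omega
          · rw [Function.update_of_ne hrp]
            by_cases hra : r = a
            · rw [hra, Function.update_self]
              simp only [PNet.fire, hMka, hPua, hPoua]
            · rw [Function.update_of_ne hra]
              simp only [PNet.fire, hPre' u hu r hrp hrq hra,
                hPost' u hu r hrp hrq hra, hMkr r hrp hrq hra]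
      rw [heq] at hfire
      exact hfire

/-- Chain agglomeration of `p` and `q` as the fresh place `a`:
if the marking extending `m` (a marking on `P ∖ {p, q}`) with `a ↦ x` is reachable
in the agglomerated net `N'`, then the marking extending `m` with `p ↦ x` and `q ↦ 0`
is reachable in `N`. -/
theorem chainAgglomeration_reach_back {X T : Type} [DecidableEq X] (N : PNet X T)
    (hwf : N.WF) (p q : X) (t : T) (hca : N.ChainAgglomerable p q t)
    (a : X) (ha : a ∉ N.places)
    (m : X → ℕ) (hm : m ∈ ValuationOn (N.places \ {p, q})) (x : ℕ) :
    Function.update m a x ∈ (N.agglom {p, q} a).R →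
      Function.update (Function.update m p x) q 0 ∈ N.R := by
  intro hreach
  have hkey := key_sim N hwf p q t hca a ha (Function.update m a x) hreach
  obtain ⟨hp, hq, hpq, -⟩ := hca
  have hpa : p ≠ a := fun h => ha (h ▸ hp)
  have hqa : q ≠ a := fun h => ha (h ▸ hq)
  have : Function.update (Function.update
      (Function.update (Function.update m a x) a 0) p ((Function.update m a x) a)) q 0
      = Function.update (Function.update m p x) q 0 := by
    funext r
    by_cases hrq : r = q
    · rw [hrq]; simp
    · rw [Function.update_of_ne hrq, Function.update_of_ne hrq]
      by_cases hrp : r = p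
      · rw [hrp]; simp [Function.update_of_ne hpa]
      · rw [Function.update_of_ne hrp, Function.update_of_ne hrp]
        by_cases hra : r = a
        · rw [hra]
          simp only [Function.update_self]
          exact (hm a (fun h => ha h.1)).symm
        · rw [Function.update_of_ne hra, Function.update_of_ne hra]
  rw [this] at hkey
  exact hkey
end

section
/- Let N = (P, T, Pre, Post, m₀) be a marked Petri net with chain-agglomerable places p, q ∈ P (witnessed by transition t). Then for every marking m : P ∖ {p, q} → ℕ and all x, u, v ∈ ℕ with u + v = x: if the marking on P extending m with p ↦ x and q ↦ 0 belongs to R(N), then the marking on P extending m with p ↦ u and q ↦ v belongs to R(N). -/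
/-- With chain-agglomerable places `p`, `q` (witnessed by `t`),
the tokens of `p` can be distributed freely between `p` and `q`: if the marking
extending `m` with `p ↦ x` and `q ↦ 0` is reachable and `u + v = x`, then the
marking extending `m` with `p ↦ u` and `q ↦ v` is reachable. -/
theorem chainAgglomerable_distribute {X T : Type} [DecidableEq X] (N : PNet X T)
    (p q : X) (t : T) (hca : N.ChainAgglomerable p q t)
    (m : X → ℕ) (hm : m ∈ ValuationOn (N.places \ {p, q}))
    (x u v : ℕ) (huv : u + v = x) :
    Function.update (Function.update m p x) q 0 ∈ N.R →
      Function.update (Function.update m p u) q v ∈ N.R := by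
  obtain ⟨hp, hq, hpq, ht, hPre1, hPre0, hPost1, hPost0, _, _⟩ := hca
  intro hx
  induction v generalizing u with
  | zero =>
    have : u = x := by omega
    subst this
    simpa using hx
  | succ v ih =>
    have hR := ih (u + 1) (by omega)
    set M := Function.update (Function.update m p (u + 1)) q v with hM
    have hMp : M p = u + 1 := by
      simp [hM, Function.update_of_ne hpq, Function.update_self]
    have hen : N.Enabled t M := by
      refine ⟨ht, fun r => ?_⟩
      by_cases hr : r = p
      · subst hr; rw [hPre1, hMp]; omega
      · rw [hPre0 r hr]; omega
    have hfire : N.fire t M = Function.update (Function.update m p u) q (v + 1) := by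
      funext r
      unfold PNet.fire
      by_cases hrq : r = q
      · subst hrq
        rw [hPre0 r (Ne.symm hpq), hPost1]
        simp [hM]
      · by_cases hrp : r = p
        · subst hrp
          rw [hPre1, hPost0 r hpq, hMp]
          simp [Function.update_of_ne hrq, Function.update_self]
        · rw [hPre0 r hrp, hPost0 r hrq]
          simp [hM, Function.update_of_ne hrq, Function.update_of_ne hrp]
    exact Relation.ReflTransGen.tail hR ⟨t, hen, hfire.symm⟩
end

section
/- Let N = (P, T, Pre, Post, m₀) be a marked Petri net with chain-agglomerable places p, q ∈ P, and let N' be their chain agglomeration with new place a. Then for every marking m : P ∖ {p, q} → ℕ and all x, y ∈ ℕ: the marking on P extending m with p ↦ x and q ↦ y belongs to R(N) if and only if the marking on (P ∖ {p, q}) ∪ {a} extending m with a ↦ x + y belongs to R(N'). -/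
section ChainAggAux

variable {X T : Type} [DecidableEq X]

lemma restrictTo_mem {V : Set X} {r : X} (h : r ∈ V) (f : X → ℕ) :
    restrictTo V f r = f r := Set.indicator_of_mem h f

lemma restrictTo_not_mem {V : Set X} {r : X} (h : r ∉ V) (f : X → ℕ) :
    restrictTo V f r = 0 := Set.indicator_of_notMem h f

variable (N : PNet X T) (p q a : X)

lemma ag_Pre_a (hpq : p ≠ q) (u : T) :
    (N.agglom {p, q} a).Pre u a = N.Pre u p + N.Pre u q := by
  simp [PNet.agglom, Finset.sum_pair hpq]

lemma ag_Pre_ne (u : T) {r : X} (hr : r ≠ a) :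
    (N.agglom {p, q} a).Pre u r = restrictTo (N.places \ {p, q}) (N.Pre u) r := by
  simp [PNet.agglom, Function.update_apply, hr]

lemma ag_Post_a (hpq : p ≠ q) (u : T) :
    (N.agglom {p, q} a).Post u a = N.Post u p + N.Post u q := by
  simp [PNet.agglom, Finset.sum_pair hpq]

lemma ag_Post_ne (u : T) {r : X} (hr : r ≠ a) :
    (N.agglom {p, q} a).Post u r = restrictTo (N.places \ {p, q}) (N.Post u) r := by
  simp [PNet.agglom, Function.update_apply, hr]

lemma ag_m0_a (hpq : p ≠ q) :
    (N.agglom {p, q} a).m0 a = N.m0 p + N.m0 q := by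
  simp [PNet.agglom, Finset.sum_pair hpq]

lemma ag_m0_ne {r : X} (hr : r ≠ a) :
    (N.agglom {p, q} a).m0 r = restrictTo (N.places \ {p, q}) N.m0 r := by
  simp [PNet.agglom, Function.update_apply, hr]

/-- Firing `t` (the chain transition) `y` times moves `y` tokens from `p` to `q`. -/
lemma fireT_many (t : T) (ht : t ∈ N.trans) (hpq : p ≠ q)
    (hPre : N.Pre t p = 1) (hPre0 : ∀ r, r ≠ p → N.Pre t r = 0)
    (hPost : N.Post t q = 1) (hPost0 : ∀ r, r ≠ q → N.Post t r = 0) :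
    ∀ (y : ℕ) (M : X → ℕ), y ≤ M p →
      Relation.ReflTransGen N.Step M
        (Function.update (Function.update M p (M p - y)) q (M q + y)) := by
  intro y
  induction y with
  | zero =>
      intro M _
      have h : Function.update (Function.update M p (M p - 0)) q (M q + 0) = M := by
        funext r
        simp only [Function.update_apply]
        split_ifs with h1 h2 <;> simp_all
      rw [h]
  | succ n ih =>
      intro M hy
      have hen : N.Enabled t M := by
        refine ⟨ht, fun r => ?_⟩
        by_cases hr : r = p
        · subst r; rw [hPre]; omega
        · rw [hPre0 r hr]; omega
      have hstep : N.Step M (N.fire t M) := ⟨t, hen, rfl⟩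
      have hfp : N.fire t M p = M p - 1 := by
        simp [PNet.fire, hPre, hPost0 p hpq]
      have hfq : N.fire t M q = M q + 1 := by
        simp [PNet.fire, hPre0 q (Ne.symm hpq), hPost]
      have hfr : ∀ r, r ≠ p → r ≠ q → N.fire t M r = M r := by
        intro r hrp hrq
        simp [PNet.fire, hPre0 r hrp, hPost0 r hrq]
      have h2 := ih (N.fire t M) (by omega)
      have key : Function.update (Function.update (N.fire t M) p (N.fire t M p - n)) q
            (N.fire t M q + n)
          = Function.update (Function.update M p (M p - (n + 1))) q (M q + (n + 1)) := by
        funext r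
        simp only [Function.update_apply]
        split_ifs with h1 h2'
        · omega
        · omega
        · exact hfr r h2' h1
      rw [key] at h2
      exact Relation.ReflTransGen.head hstep h2

/-- Backward simulation: every split of a reachable marking of the agglomerated net
is reachable in the original net. -/
lemma ag_backward (t : T) (hwf : N.WF) (hca : N.ChainAgglomerable p q t)
    (ha : a ∉ N.places) :
    ∀ M', M' ∈ (N.agglom {p, q} a).R → ∀ x y, x + y = M' a →
      Function.update (Function.update (restrictTo (N.places \ {p, q}) M') p x) q y ∈ N.R := by
  obtain ⟨hp, hq, hpq, ht, hPre, hPre0, hPost, hPost0, hPostq, hm0q⟩ := hca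
  obtain ⟨-, -, hm0wf, htwf⟩ := hwf
  have hap : a ≠ p := fun h => ha (h ▸ hp)
  have haq : a ≠ q := fun h => ha (h ▸ hq)
  intro M' hM'
  simp only [PNet.R, Set.mem_setOf_eq] at hM' ⊢
  induction hM' with
  | refl =>
      intro x y hxy
      have hma : (N.agglom {p, q} a).m0 a = N.m0 p := by
        simp [ag_m0_a N p q a hpq, hm0q]
      have hy : y ≤ N.m0 p := by omega
      have h2 := fireT_many N p q t ht hpq hPre hPre0 hPost hPost0 y N.m0 hy
      have key : Function.update (Function.update N.m0 p (N.m0 p - y)) q (N.m0 q + y)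
          = Function.update (Function.update
              (restrictTo (N.places \ {p, q}) (N.agglom {p, q} a).m0) p x) q y := by
        funext r
        simp only [Function.update_apply]
        split_ifs with h1 h2'
        · simp [hm0q]
        · omega
        · by_cases hmem : r ∈ N.places \ ({p, q} : Set X)
          · rw [restrictTo_mem hmem, ag_m0_ne N p q a (by rintro rfl; exact ha hmem.1),
              restrictTo_mem hmem]
          · rw [restrictTo_not_mem hmem]
            exact hm0wf r (by
              intro hr
              exact hmem ⟨hr, by simp [h1, h2']⟩)
      rw [key] at h2
      exact h2
  | tail hrtg hstep ih =>
      rename_i b c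
      intro x y hxy
      obtain ⟨u, ⟨hu, henb⟩, rfl⟩ := hstep
      have hu' : u ∈ N.trans := hu
      by_cases hut : u = t
      · subst hut
        have hfix : (N.agglom {p, q} a).fire u b = b := by
          funext r
          by_cases hr : r = a
          · subst r
            have h1 : (N.agglom {p, q} a).Pre u a = 1 := by
              rw [ag_Pre_a N p q a hpq, hPre, hPre0 q (Ne.symm hpq)]
            have h2 : (N.agglom {p, q} a).Post u a = 1 := by
              rw [ag_Post_a N p q a hpq, hPost, hPost0 p hpq]
            have h3 := henb a
            rw [h1] at h3
            simp only [PNet.fire, h1, h2]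
            omega
          · have h1 : (N.agglom {p, q} a).Pre u r = 0 := by
              rw [ag_Pre_ne N p q a u hr]
              by_cases hmem : r ∈ N.places \ ({p, q} : Set X)
              · rw [restrictTo_mem hmem]
                exact hPre0 r (by rintro rfl; exact hmem.2 (Or.inl rfl))
              · exact restrictTo_not_mem hmem _
            have h2 : (N.agglom {p, q} a).Post u r = 0 := by
              rw [ag_Post_ne N p q a u hr]
              by_cases hmem : r ∈ N.places \ ({p, q} : Set X)
              · rw [restrictTo_mem hmem]
                exact hPost0 r (by rintro rfl; exact hmem.2 (Or.inr rfl))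
              · exact restrictTo_not_mem hmem _
            simp [PNet.fire, h1, h2]
        rw [hfix]
        exact ih x y (by rw [hfix] at hxy; exact hxy)
      · have hPostuq : N.Post u q = 0 := hPostq u hu' hut
        have henba := henb a
        rw [ag_Pre_a N p q a hpq] at henba
        have hca' : (N.agglom {p, q} a).fire u b a
            = b a - (N.Pre u p + N.Pre u q) + N.Post u p := by
          simp [PNet.fire, ag_Pre_a N p q a hpq, ag_Post_a N p q a hpq, hPostuq]
        have hM1 := ih (b a - N.Pre u q) (N.Pre u q) (by omega)
        set M1 : X → ℕ := Function.update (Function.update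
            (restrictTo (N.places \ {p, q}) b) p (b a - N.Pre u q)) q (N.Pre u q)
            with hM1def
        have henu : N.Enabled u M1 := by
          refine ⟨hu', fun r => ?_⟩
          by_cases h1 : r = q
          · subst h1; simp [hM1def, Function.update_apply]
          · by_cases h2 : r = p
            · subst r
              simp only [hM1def, Function.update_apply, if_neg hpq, if_pos rfl, if_true]
              omega
            · simp only [hM1def, Function.update_apply, if_neg h1, if_neg h2]
              by_cases hmem : r ∈ N.places \ ({p, q} : Set X)
              · rw [restrictTo_mem hmem]
                have hh := henb r
                rw [ag_Pre_ne N p q a u (by rintro rfl; exact ha hmem.1),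
                  restrictTo_mem hmem] at hh
                exact hh
              · rw [restrictTo_not_mem hmem]
                have hrp : r ∉ N.places := by
                  intro hr; exact hmem ⟨hr, by simp [h1, h2]⟩
                exact le_of_eq ((htwf u hu' r hrp).1)
        have hstep2 : N.Step M1 (N.fire u M1) := ⟨u, henu, rfl⟩
        set c' := (N.agglom {p, q} a).fire u b with hc'
        have hkey : N.fire u M1
            = Function.update (Function.update
                (restrictTo (N.places \ {p, q}) c') p (c' a)) q 0 := by
          funext r
          by_cases h1 : r = q
          · subst r
            simp [PNet.fire, hM1def, Function.update_apply, hPostuq]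
          · by_cases h2 : r = p
            · subst r
              simp only [PNet.fire, hM1def, Function.update_apply, if_neg hpq,
                if_pos rfl, if_true, if_neg h1, hca']
              omega
            · simp only [PNet.fire, hM1def, Function.update_apply, if_neg h1, if_neg h2]
              by_cases hmem : r ∈ N.places \ ({p, q} : Set X)
              · have hra : r ≠ a := by rintro rfl; exact ha hmem.1
                rw [restrictTo_mem hmem, restrictTo_mem hmem]
                simp only [hc', PNet.fire, ag_Pre_ne N p q a u hra,
                  ag_Post_ne N p q a u hra, restrictTo_mem hmem]
              · rw [restrictTo_not_mem hmem, restrictTo_not_mem hmem]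
                have hr : r ∉ N.places := by
                  intro hr; exact hmem ⟨hr, by simp [h1, h2]⟩
                rw [(htwf u hu' r hr).1, (htwf u hu' r hr).2]
        have hc'a : c' a = x + y := hxy.symm
        have h3 := fireT_many N p q t ht hpq hPre hPre0 hPost hPost0 y
          (Function.update (Function.update
            (restrictTo (N.places \ {p, q}) c') p (c' a)) q 0)
          (by simp [Function.update_apply, hpq]; omega)
        have key2 : Function.update (Function.update
              (Function.update (Function.update
                (restrictTo (N.places \ {p, q}) c') p (c' a)) q 0) p
              ((Function.update (Function.update
                (restrictTo (N.places \ {p, q}) c') p (c' a)) q 0) p - y)) q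
              ((Function.update (Function.update
                (restrictTo (N.places \ {p, q}) c') p (c' a)) q 0) q + y)
            = Function.update (Function.update
                (restrictTo (N.places \ {p, q}) c') p x) q y := by
          funext r
          by_cases h1 : r = q
          · subst h1; simp [Function.update_apply]
          · by_cases h2 : r = p
            · subst r
              simp only [Function.update_apply, if_neg hpq, if_pos rfl, if_true, if_neg h1]
              omega
            · simp only [Function.update_apply, if_neg h1, if_neg h2]
        rw [key2, ← hkey] at h3
        exact (hM1.tail hstep2).trans h3

/-- Forward simulation: the image of a reachable marking of `N` is reachable in the
agglomerated net. -/
lemma ag_forward (hpq : p ≠ q) (M : X → ℕ) (hM : M ∈ N.R) :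
    Function.update (restrictTo (N.places \ {p, q}) M) a (M p + M q)
      ∈ (N.agglom {p, q} a).R := by
  simp only [PNet.R, Set.mem_setOf_eq] at hM ⊢
  have hstep : ∀ M M' : X → ℕ, N.Step M M' →
      (N.agglom {p, q} a).Step
        (Function.update (restrictTo (N.places \ {p, q}) M) a (M p + M q))
        (Function.update (restrictTo (N.places \ {p, q}) M') a (M' p + M' q)) := by
    rintro M M' ⟨u, ⟨hu, hen⟩, rfl⟩
    refine ⟨u, ⟨hu, fun r => ?_⟩, ?_⟩
    · by_cases hr : r = a
      · subst r
        rw [ag_Pre_a N p q a hpq]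
        simp only [Function.update_self]
        exact Nat.add_le_add (hen p) (hen q)
      · rw [ag_Pre_ne N p q a u hr, Function.update_apply, if_neg hr]
        by_cases hmem : r ∈ N.places \ ({p, q} : Set X)
        · rw [restrictTo_mem hmem, restrictTo_mem hmem]; exact hen r
        · rw [restrictTo_not_mem hmem, restrictTo_not_mem hmem]
    · funext r
      by_cases hr : r = a
      · subst r
        simp only [PNet.fire, Function.update_self, ag_Pre_a N p q a hpq,
          ag_Post_a N p q a hpq]
        have h1 := hen p; have h2 := hen q
        omega
      · simp only [PNet.fire, Function.update_apply, if_neg hr,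
          ag_Pre_ne N p q a u hr, ag_Post_ne N p q a u hr]
        by_cases hmem : r ∈ N.places \ ({p, q} : Set X)
        · simp [PNet.fire, restrictTo_mem hmem]
        · simp [PNet.fire, restrictTo_not_mem hmem]
  have h := Relation.ReflTransGen.lift
    (fun M => Function.update (restrictTo (N.places \ {p, q}) M) a (M p + M q))
    (fun M M' h => hstep M M' h) _ _ hM
  simp only [Function.onFun] at h
  have hm0 : Function.update (restrictTo (N.places \ {p, q}) N.m0) a (N.m0 p + N.m0 q)
      = (N.agglom {p, q} a).m0 := by
    funext r
    by_cases hr : r = a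
    · subst r; rw [Function.update_self, ag_m0_a N p q a hpq]
    · rw [Function.update_apply, if_neg hr, ag_m0_ne N p q a hr]
  rw [hm0] at h
  exact h

end ChainAggAux

/-- Chain agglomeration of `p` and `q` as the fresh place `a`:
for every marking `m` on `P ∖ {p, q}` and all `x y : ℕ`, the marking extending `m`
with `p ↦ x` and `q ↦ y` is reachable in `N` iff the marking extending `m` with
`a ↦ x + y` is reachable in the agglomerated net `N'`. -/
theorem chainAgglomeration_reach_iff {X T : Type} [DecidableEq X] (N : PNet X T)
    (hwf : N.WF) (p q : X) (t : T) (hca : N.ChainAgglomerable p q t)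
    (a : X) (ha : a ∉ N.places)
    (m : X → ℕ) (hm : m ∈ ValuationOn (N.places \ {p, q})) (x y : ℕ) :
    Function.update (Function.update m p x) q y ∈ N.R ↔
      Function.update m a (x + y) ∈ (N.agglom {p, q} a).R := by
  have hpq : p ≠ q := hca.2.2.1
  have hp : p ∈ N.places := hca.1
  constructor
  · intro hM
    have h := ag_forward N p q a hpq _ hM
    have he : Function.update (restrictTo (N.places \ {p, q})
          (Function.update (Function.update m p x) q y)) a
          ((Function.update (Function.update m p x) q y) p +
           (Function.update (Function.update m p x) q y) q)
        = Function.update m a (x + y) := by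
      funext r
      by_cases hr : r = a
      · subst r
        simp [Function.update_apply, hpq]
      · rw [Function.update_apply, if_neg hr, Function.update_apply, if_neg hr]
        by_cases hmem : r ∈ N.places \ ({p, q} : Set X)
        · have hrp : r ≠ p := fun h => hmem.2 (Or.inl h)
          have hrq : r ≠ q := fun h => hmem.2 (Or.inr h)
          rw [restrictTo_mem hmem, Function.update_apply, if_neg hrq,
            Function.update_apply, if_neg hrp]
        · rw [restrictTo_not_mem hmem, hm r hmem]
    rw [he] at h
    exact h
  · intro hM'
    have h := ag_backward N p q a t hwf hca ha _ hM' x y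
      (by rw [Function.update_self])
    have he : restrictTo (N.places \ {p, q}) (Function.update m a (x + y)) = m := by
      funext r
      by_cases hmem : r ∈ N.places \ ({p, q} : Set X)
      · rw [restrictTo_mem hmem, Function.update_apply,
          if_neg (by rintro rfl; exact ha hmem.1)]
      · rw [restrictTo_not_mem hmem, hm r hmem]
    rw [he] at h
    exact h
end

section
/- Let N = (P, T, Pre, Post, m₀) be a marked Petri net with loop-agglomerable places π₀, …, π_{n−1} ∈ P (n ≥ 1), let A = {π₀, …, π_{n−1}}, and let N' be their loop agglomeration with new place a. Then for every marking m : P ∖ A → ℕ and every m' : A → ℕ: the marking on P agreeing with m on P ∖ A and with m' on A belongs to R(N) if and only if the marking on (P ∖ A) ∪ {a} extending m with a ↦ Σ_{i<n} m'(πᵢ) belongs to R(N'). -/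
section LoopAux

variable {X T : Type} [DecidableEq X]

private lemma sum_sub_nat {α : Type} (s : Finset α) (f g : α → ℕ) (h : ∀ i ∈ s, g i ≤ f i) :
    ∑ i ∈ s, (f i - g i) = (∑ i ∈ s, f i) - ∑ i ∈ s, g i := by
  have h1 : ∑ i ∈ s, (f i - g i) + ∑ i ∈ s, g i = ∑ i ∈ s, f i := by
    rw [← Finset.sum_add_distrib]
    exact Finset.sum_congr rfl fun i hi => Nat.sub_add_cancel (h i hi)
  omega

/-- unit valuation at place `π i` -/
private def eA {n : ℕ} [DecidableEq X] (π : Fin n → X) (i : Fin n) : X → ℕ :=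
  fun x => if x = π i then 1 else 0

/-- move one token from `π i` to `π j` -/
private def mv {n : ℕ} [DecidableEq X] (π : Fin n → X) (μ : X → ℕ) (i j : Fin n) : X → ℕ :=
  fun x => μ x - eA π i x + eA π j x

private def fsucc {n : ℕ} (i : Fin n) : Fin n := ⟨(i.val + 1) % n, Nat.mod_lt _ i.pos⟩

/-- the loop-agglomerability hypothesis -/
private def LoopHyp {n : ℕ} (N : PNet X T) (π : Fin n → X) : Prop :=
  ∀ i : Fin n, ∃ t ∈ N.trans,
    N.Pre t (π i) = 1 ∧ (∀ r, r ≠ π i → N.Pre t r = 0) ∧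
    N.Post t (π (fsucc i)) = 1 ∧ (∀ r, r ≠ π (fsucc i) → N.Post t r = 0)

variable {n : ℕ} (N : PNet X T) (π : Fin n → X)

private lemma mv_comp (μ : X → ℕ) (i j l : Fin n) :
    mv π (mv π μ i j) j l = mv π μ i l := by
  funext x
  simp only [mv]
  omega

private lemma mv_self (μ : X → ℕ) (i : Fin n) (h : 1 ≤ μ (π i)) :
    mv π μ i i = μ := by
  funext x
  simp only [mv, eA]
  by_cases hx : x = π i
  · subst hx; simp only [if_true]; omega
  · simp [hx]

private lemma one_le_mv (μ : X → ℕ) (i j : Fin n) : 1 ≤ mv π μ i j (π j) := by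
  simp only [mv, eA]
  simp only [if_true]
  have h3 : (if π j = π i then (1:ℕ) else 0) ≤ 1 := by split <;> omega
  omega

private lemma mv_off (μ : X → ℕ) (i j : Fin n) (x : X) (hx : ∀ k : Fin n, x ≠ π k) :
    mv π μ i j x = μ x := by
  simp only [mv, eA, if_neg (hx i), if_neg (hx j)]
  omega

private lemma step_mv (hloop : LoopHyp N π) (i : Fin n) (μ : X → ℕ) (h : 1 ≤ μ (π i)) :
    N.Step μ (mv π μ i (fsucc i)) := by
  obtain ⟨t, ht, h1, h2, h3, h4⟩ := hloop i
  have hpre : ∀ x, N.Pre t x = eA π i x := by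
    intro x; simp only [eA]
    by_cases hx : x = π i
    · subst hx; simpa using h1
    · simp [hx, h2 x hx]
  have hpost : ∀ x, N.Post t x = eA π (fsucc i) x := by
    intro x; simp only [eA]
    by_cases hx : x = π (fsucc i)
    · subst hx; simpa using h3
    · simp [hx, h4 x hx]
  refine ⟨t, ⟨ht, fun x => ?_⟩, funext fun x => ?_⟩
  · rw [hpre]
    simp only [eA]
    by_cases hx : x = π i
    · subst hx; simpa using h
    · simp [hx]
  · simp only [PNet.fire, mv, hpre, hpost]

/-- move a token from `π 0` to `π k` -/
private lemma move0 (hloop : LoopHyp N π) (hn : 0 < n) (k : ℕ) : ∀ (hk : k < n) (μ : X → ℕ), 1 ≤ μ (π ⟨0, hn⟩) →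
    Relation.ReflTransGen N.Step μ (mv π μ ⟨0, hn⟩ ⟨k, hk⟩) := by
  induction k with
  | zero =>
    intro hk μ h
    have he : mv π μ ⟨0, hn⟩ ⟨0, hk⟩ = μ := mv_self π μ ⟨0, hn⟩ h
    rw [he]
  | succ k ih =>
    intro hk μ h
    have hk' : k < n := by omega
    have h1 := ih hk' μ h
    have h2 : N.Step (mv π μ ⟨0, hn⟩ ⟨k, hk'⟩)
        (mv π (mv π μ ⟨0, hn⟩ ⟨k, hk'⟩) ⟨k, hk'⟩ (fsucc ⟨k, hk'⟩)) :=
      step_mv N π hloop _ _ (one_le_mv π μ _ _)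
    have h3 : fsucc (⟨k, hk'⟩ : Fin n) = ⟨k + 1, hk⟩ := by
      simp only [fsucc, Fin.mk.injEq]
      exact Nat.mod_eq_of_lt hk
    rw [h3, mv_comp] at h2
    exact h1.tail h2

/-- move a token from `π i` to `π 0` -/
private lemma moveto0 (hloop : LoopHyp N π) (hn : 0 < n) (d : ℕ) : ∀ (i : Fin n) (μ : X → ℕ), n - i.val ≤ d → 1 ≤ μ (π i) →
    Relation.ReflTransGen N.Step μ (mv π μ i ⟨0, hn⟩) := by
  induction d with
  | zero => intro i μ hd h; exact absurd hd (by have := i.isLt; omega)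
  | succ d ih =>
    intro i μ hd h
    by_cases h0 : i.val = 0
    · have : i = ⟨0, hn⟩ := Fin.ext h0
      subst this
      rw [mv_self π μ _ h]
    · have hstep := step_mv N π hloop i μ h
      by_cases hlast : i.val + 1 = n
      · have hfs : fsucc i = ⟨0, hn⟩ := by
          simp only [fsucc, Fin.mk.injEq, hlast]
          exact Nat.mod_self n
        rw [hfs] at hstep
        exact Relation.ReflTransGen.single hstep
      · have hlt : i.val + 1 < n := by have := i.isLt; omega
        have hfs : fsucc i = ⟨i.val + 1, hlt⟩ := by
          simp only [fsucc, Fin.mk.injEq]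
          exact Nat.mod_eq_of_lt hlt
        have h2 := ih (fsucc i) (mv π μ i (fsucc i))
          (by rw [hfs]; simp only; omega) (one_le_mv π μ _ _)
        rw [mv_comp] at h2
        exact Relation.ReflTransGen.head hstep h2

private lemma sum_mv_erase (hinj : Function.Injective π) (hn : 0 < n) (μ : X → ℕ)
    (i : Fin n) (hi : i ≠ (⟨0, hn⟩ : Fin n)) (h : 1 ≤ μ (π i)) :
    (∑ j ∈ Finset.univ.erase (⟨0, hn⟩ : Fin n), mv π μ i ⟨0, hn⟩ (π j)) + 1
      = ∑ j ∈ Finset.univ.erase (⟨0, hn⟩ : Fin n), μ (π j) := by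
  have hterm : ∀ j ∈ Finset.univ.erase (⟨0, hn⟩ : Fin n),
      mv π μ i ⟨0, hn⟩ (π j) = μ (π j) - (if j = i then 1 else 0) := by
    intro j hj
    have hjz : j ≠ (⟨0, hn⟩ : Fin n) := (Finset.mem_erase.mp hj).1
    simp only [mv, eA]
    have h1 : (if π j = π i then (1:ℕ) else 0) = (if j = i then 1 else 0) := by
      by_cases hji : j = i
      · simp [hji]
      · rw [if_neg hji, if_neg fun hh => hji (hinj hh)]
    have h2 : (if π j = π (⟨0, hn⟩ : Fin n) then (1:ℕ) else 0) = 0 :=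
      if_neg fun hh => hjz (hinj hh)
    rw [h1, h2]
    omega
  have hle : ∀ j ∈ Finset.univ.erase (⟨0, hn⟩ : Fin n),
      (if j = i then 1 else 0) ≤ μ (π j) := by
    intro j _; split
    · next hji => subst hji; exact h
    · exact Nat.zero_le _
  rw [Finset.sum_congr rfl hterm, sum_sub_nat _ _ _ hle, Finset.sum_ite_eq']
  have hmem : i ∈ Finset.univ.erase (⟨0, hn⟩ : Fin n) :=
    Finset.mem_erase.mpr ⟨hi, Finset.mem_univ _⟩
  rw [if_pos hmem]
  have hile : μ (π i) ≤ ∑ j ∈ Finset.univ.erase (⟨0, hn⟩ : Fin n), μ (π j) :=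
    Finset.single_le_sum (f := fun j => μ (π j)) (fun _ _ => Nat.zero_le _) hmem
  omega

private lemma sum_mv_univ (hinj : Function.Injective π) (μ : X → ℕ) (i j : Fin n)
    (h : 1 ≤ μ (π i)) :
    ∑ k, mv π μ i j (π k) = ∑ k, μ (π k) := by
  have hterm : ∀ k ∈ (Finset.univ : Finset (Fin n)),
      mv π μ i j (π k) = (μ (π k) - (if k = i then 1 else 0)) + (if k = j then 1 else 0) := by
    intro k _
    simp only [mv, eA]
    have h1 : (if π k = π i then (1:ℕ) else 0) = (if k = i then 1 else 0) := by
      by_cases hki : k = i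
      · simp [hki]
      · rw [if_neg hki, if_neg fun hh => hki (hinj hh)]
    have h2 : (if π k = π j then (1:ℕ) else 0) = (if k = j then 1 else 0) := by
      by_cases hkj : k = j
      · simp [hkj]
      · rw [if_neg hkj, if_neg fun hh => hkj (hinj hh)]
    rw [h1, h2]
  have hle : ∀ k ∈ (Finset.univ : Finset (Fin n)), (if k = i then 1 else 0) ≤ μ (π k) := by
    intro k _; split
    · next hki => subst hki; exact h
    · exact Nat.zero_le _
  rw [Finset.sum_congr rfl hterm, Finset.sum_add_distrib, sum_sub_nat _ _ _ hle,
    Finset.sum_ite_eq', Finset.sum_ite_eq', if_pos (Finset.mem_univ i), if_pos (Finset.mem_univ j)]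
  have hile : μ (π i) ≤ ∑ k, μ (π k) :=
    Finset.single_le_sum (f := fun k => μ (π k)) (fun _ _ => Nat.zero_le _) (Finset.mem_univ i)
  omega

private lemma move0F (hloop : LoopHyp N π) (hn : 0 < n) (i : Fin n) (μ : X → ℕ)
    (h : 1 ≤ μ (π ⟨0, hn⟩)) :
    Relation.ReflTransGen N.Step μ (mv π μ ⟨0, hn⟩ i) :=
  move0 N π hloop hn i.val i.isLt μ h

private lemma collect (hinj : Function.Injective π) (hloop : LoopHyp N π) (hn : 0 < n) :
    ∀ (s : ℕ) (μ : X → ℕ),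
    (∑ i ∈ Finset.univ.erase (⟨0, hn⟩ : Fin n), μ (π i)) ≤ s →
    ∃ ν, Relation.ReflTransGen N.Step μ ν ∧ (∀ x, (∀ i, x ≠ π i) → ν x = μ x) ∧
      (∀ i, i ≠ (⟨0, hn⟩ : Fin n) → ν (π i) = 0) ∧ ν (π ⟨0, hn⟩) = ∑ i, μ (π i) := by
  intro s
  induction s with
  | zero =>
    intro μ hs
    refine ⟨μ, Relation.ReflTransGen.refl, fun _ _ => rfl, fun i hi => ?_, ?_⟩
    · have hmem : i ∈ Finset.univ.erase (⟨0, hn⟩ : Fin n) :=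
        Finset.mem_erase.mpr ⟨hi, Finset.mem_univ _⟩
      have hle2 : μ (π i) ≤ ∑ j ∈ Finset.univ.erase (⟨0, hn⟩ : Fin n), μ (π j) :=
        Finset.single_le_sum (f := fun j => μ (π j)) (fun _ _ => Nat.zero_le _) hmem
      omega
    · refine (Finset.sum_eq_single (f := fun j => μ (π j)) (⟨0, hn⟩ : Fin n) (fun b _ hb => ?_) (fun hmem => absurd (Finset.mem_univ _) hmem)).symm
      have hmem : b ∈ Finset.univ.erase (⟨0, hn⟩ : Fin n) :=
        Finset.mem_erase.mpr ⟨hb, Finset.mem_univ _⟩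
      have hle2 : μ (π b) ≤ ∑ j ∈ Finset.univ.erase (⟨0, hn⟩ : Fin n), μ (π j) :=
        Finset.single_le_sum (f := fun j => μ (π j)) (fun _ _ => Nat.zero_le _) hmem
      show μ (π b) = 0
      omega
  | succ s ih =>
    intro μ hs
    by_cases hz : ∀ i, i ≠ (⟨0, hn⟩ : Fin n) → μ (π i) = 0
    · refine ⟨μ, Relation.ReflTransGen.refl, fun _ _ => rfl, hz, ?_⟩
      exact (Finset.sum_eq_single (f := fun j => μ (π j)) (⟨0, hn⟩ : Fin n) (fun b _ hb => hz b hb)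
        (fun hmem => absurd (Finset.mem_univ _) hmem)).symm
    · push_neg at hz
      obtain ⟨i, hi, hne⟩ := hz
      have h1 : 1 ≤ μ (π i) := Nat.one_le_iff_ne_zero.mpr hne
      have hm := moveto0 N π hloop hn n i μ (by omega) h1
      have hsum1 := sum_mv_erase π hinj hn μ i hi h1
      obtain ⟨ν, hr, hoff, hzero, hsum⟩ := ih (mv π μ i ⟨0, hn⟩) (by omega)
      exact ⟨ν, hm.trans hr, fun x hx => (hoff x hx).trans (mv_off π μ i _ x hx), hzero,
        hsum.trans (sum_mv_univ π hinj μ i _ h1)⟩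

private lemma distribute (hinj : Function.Injective π) (hloop : LoopHyp N π) (hn : 0 < n) :
    ∀ (s : ℕ) (ν μ' : X → ℕ),
    (∑ i ∈ Finset.univ.erase (⟨0, hn⟩ : Fin n), μ' (π i)) ≤ s →
    (∀ x, (∀ i, x ≠ π i) → ν x = μ' x) →
    (∀ i, i ≠ (⟨0, hn⟩ : Fin n) → ν (π i) = 0) →
    ν (π ⟨0, hn⟩) = ∑ i, μ' (π i) →
    Relation.ReflTransGen N.Step ν μ' := by
  intro s
  induction s with
  | zero =>
    intro ν μ' hs hoff hzero hsum
    have hz : ∀ i, i ≠ (⟨0, hn⟩ : Fin n) → μ' (π i) = 0 := by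
      intro i hi
      have hmem : i ∈ Finset.univ.erase (⟨0, hn⟩ : Fin n) :=
        Finset.mem_erase.mpr ⟨hi, Finset.mem_univ _⟩
      have hle2 : μ' (π i) ≤ ∑ j ∈ Finset.univ.erase (⟨0, hn⟩ : Fin n), μ' (π j) :=
        Finset.single_le_sum (f := fun j => μ' (π j)) (fun _ _ => Nat.zero_le _) hmem
      omega
    have heq : ν = μ' := by
      funext x
      by_cases hx : ∃ i, π i = x
      · obtain ⟨i, rfl⟩ := hx
        by_cases hiz : i = (⟨0, hn⟩ : Fin n)
        · subst hiz
          rw [hsum]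
          exact (Finset.sum_eq_single (f := fun j => μ' (π j)) (⟨0, hn⟩ : Fin n) (fun b _ hb => hz b hb)
            (fun hmem => absurd (Finset.mem_univ _) hmem)).symm.symm
        · rw [hzero i hiz, hz i hiz]
      · exact hoff x fun i hxi => hx ⟨i, hxi.symm⟩
    rw [heq]
  | succ s ih =>
    intro ν μ' hs hoff hzero hsum
    by_cases hz : ∀ i, i ≠ (⟨0, hn⟩ : Fin n) → μ' (π i) = 0
    · have heq : ν = μ' := by
        funext x
        by_cases hx : ∃ i, π i = x
        · obtain ⟨i, rfl⟩ := hx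
          by_cases hiz : i = (⟨0, hn⟩ : Fin n)
          · subst hiz
            rw [hsum]
            exact (Finset.sum_eq_single _ (fun b _ hb => hz b hb)
              (fun hmem => absurd (Finset.mem_univ _) hmem))
          · rw [hzero i hiz, hz i hiz]
        · exact hoff x fun i hxi => hx ⟨i, hxi.symm⟩
      rw [heq]
    · push_neg at hz
      obtain ⟨i, hi, hne⟩ := hz
      have h1 : 1 ≤ μ' (π i) := Nat.one_le_iff_ne_zero.mpr hne
      have hsum1 := sum_mv_erase π hinj hn μ' i hi h1
      have hmain := ih ν (mv π μ' i ⟨0, hn⟩) (by omega)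
        (fun x hx => (hoff x hx).trans (mv_off π μ' i _ x hx).symm)
        hzero
        (hsum.trans (sum_mv_univ π hinj μ' i _ h1).symm)
      have hmv := move0F N π hloop hn i (mv π μ' i ⟨0, hn⟩) (one_le_mv π μ' i ⟨0, hn⟩)
      have hms : mv π (mv π μ' i ⟨0, hn⟩) ⟨0, hn⟩ i = μ' := by
        rw [mv_comp]; exact mv_self π μ' i h1
      rw [hms] at hmv
      exact hmain.trans hmv

private lemma redistribute (hinj : Function.Injective π) (hloop : LoopHyp N π) (hn : 0 < n)
    (μ μ' : X → ℕ) (hoff : ∀ x, (∀ i, x ≠ π i) → μ x = μ' x)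
    (hsum : ∑ i, μ (π i) = ∑ i, μ' (π i)) :
    Relation.ReflTransGen N.Step μ μ' := by
  obtain ⟨ν, h1, h2, h3, h4⟩ := collect N π hinj hloop hn
    (∑ i ∈ Finset.univ.erase (⟨0, hn⟩ : Fin n), μ (π i)) μ le_rfl
  exact h1.trans (distribute N π hinj hloop hn
    (∑ i ∈ Finset.univ.erase (⟨0, hn⟩ : Fin n), μ' (π i)) ν μ' le_rfl
    (fun x hx => (h2 x hx).trans (hoff x hx)) h3 (h4.trans hsum))

private noncomputable def phi (A : Finset X) (a : X) : (X → ℕ) → (X → ℕ) :=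
  fun μ => Function.update (restrictTo (N.places \ ↑A) μ) a (∑ i, μ (π i))

private lemma phi_step (A : Finset X) (a : X)
    (hsumA : ∀ f : X → ℕ, ∑ x ∈ A, f x = ∑ i, f (π i))
    {μ ν : X → ℕ} (h : N.Step μ ν) :
    (N.agglom A a).Step (phi N π A a μ) (phi N π A a ν) := by
  obtain ⟨t, ⟨ht, hen⟩, rfl⟩ := h
  refine ⟨t, ⟨ht, fun x => ?_⟩, funext fun x => ?_⟩
  · by_cases hx : x = a
    · subst hx
      simp only [PNet.agglom, phi, Function.update_self]
      rw [hsumA]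
      exact Finset.sum_le_sum fun i _ => hen (π i)
    · simp only [PNet.agglom, phi, Function.update_of_ne hx, restrictTo]
      by_cases hmem : x ∈ N.places \ ↑A
      · rw [Set.indicator_of_mem hmem, Set.indicator_of_mem hmem]
        exact hen x
      · rw [Set.indicator_of_notMem hmem, Set.indicator_of_notMem hmem]
  · by_cases hx : x = a
    · subst hx
      simp only [PNet.fire, PNet.agglom, phi, Function.update_self]
      rw [hsumA, hsumA]
      rw [Finset.sum_add_distrib, sum_sub_nat _ _ _ (fun i _ => hen (π i))]
    · simp only [PNet.fire, PNet.agglom, phi, Function.update_of_ne hx, restrictTo]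
      by_cases hmem : x ∈ N.places \ ↑A
      · simp only [Set.indicator_of_mem hmem, PNet.fire]
      · simp only [Set.indicator_of_notMem hmem]; omega

private lemma phi_reach (A : Finset X) (a : X)
    (hsumA : ∀ f : X → ℕ, ∑ x ∈ A, f x = ∑ i, f (π i))
    {μ : X → ℕ} (h : Relation.ReflTransGen N.Step N.m0 μ) :
    Relation.ReflTransGen (N.agglom A a).Step (N.agglom A a).m0 (phi N π A a μ) := by
  have hm0 : phi N π A a N.m0 = (N.agglom A a).m0 := by
    simp only [phi, PNet.agglom, hsumA]
  rw [← hm0]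
  exact Relation.ReflTransGen.lift (phi N π A a) (fun μ ν hs => phi_step N π A a hsumA hs) _ _ h

end LoopAux

/-- Loop agglomeration of the places `π₀, …, π_{n-1}` (pairwise
distinct, `n ≥ 1`) as the fresh place `a`: for every marking `m` on `P ∖ A` and every
marking `m'` on `A` (where `A = {π₀, …, π_{n-1}}`), the combined marking `m + m'` is
reachable in `N` iff the marking extending `m` with `a ↦ Σ_{i<n} m'(πᵢ)` is reachable
in the agglomerated net `N'`. -/
theorem loopAgglomeration_reach_iff {X T : Type} [DecidableEq X] (N : PNet X T)
    (hwf : N.WF) (n : ℕ) (hn : 1 ≤ n) (π : Fin n → X) (hinj : Function.Injective π)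
    (hπP : ∀ i, π i ∈ N.places)
    (hloop : ∀ i : Fin n, ∃ t ∈ N.trans,
        N.Pre t (π i) = 1 ∧ (∀ r, r ≠ π i → N.Pre t r = 0) ∧
        N.Post t (π ⟨(i.val + 1) % n, Nat.mod_lt _ (by omega)⟩) = 1 ∧
        (∀ r, r ≠ π ⟨(i.val + 1) % n, Nat.mod_lt _ (by omega)⟩ → N.Post t r = 0))
    (A : Finset X) (hA : A = Finset.univ.image π)
    (a : X) (ha : a ∉ N.places)
    (m : X → ℕ) (hm : m ∈ ValuationOn (N.places \ ↑A))
    (m' : X → ℕ) (hm' : m' ∈ ValuationOn ↑A) :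
    (fun x => m x + m' x) ∈ N.R ↔
      Function.update m a (∑ i : Fin n, m' (π i)) ∈ (N.agglom A a).R := by
  obtain ⟨hPfin, hTfin, hm00, hpp⟩ := hwf
  have hn0 : 0 < n := hn
  have hloopH : LoopHyp N π := fun i => hloop i
  have hsumA : ∀ f : X → ℕ, ∑ x ∈ A, f x = ∑ i, f (π i) := by
    intro f; rw [hA]
    exact Finset.sum_image fun x _ y _ h => hinj h
  have hmemA : ∀ x : X, x ∈ A ↔ ∃ i, π i = x := by
    intro x; rw [hA]; simp
  have hπa : ∀ i, π i ≠ a := fun i h => ha (h ▸ hπP i)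
  have hπnP : ∀ i, π i ∉ N.places \ ↑A := fun i hmem =>
    hmem.2 (Finset.mem_coe.mpr ((hmemA (π i)).mpr ⟨i, rfl⟩))
  have hmπ : ∀ i, m (π i) = 0 := fun i => hm _ (hπnP i)
  have hma : m a = 0 := hm a fun hmem => ha hmem.1
  have hm'a : m' a = 0 := hm' a fun hmem =>
    (let ⟨i, hi⟩ := (hmemA a).mp (Finset.mem_coe.mp hmem); hπa i hi)
  have hφmm : phi N π A a (fun x => m x + m' x) = Function.update m a (∑ i, m' (π i)) := by
    funext x
    by_cases hx : x = a
    · subst hx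
      simp only [phi, Function.update_self]
      exact Finset.sum_congr rfl fun i _ => by rw [hmπ i, Nat.zero_add]
    · simp only [phi, Function.update_of_ne hx, restrictTo]
      by_cases hmem : x ∈ N.places \ ↑A
      · rw [Set.indicator_of_mem hmem, hm' x hmem.2, Nat.add_zero]
      · rw [Set.indicator_of_notMem hmem, hm x hmem]
  constructor
  · intro h
    rw [← hφmm]
    exact phi_reach N π A a hsumA h
  · intro h
    have key : ∀ ν, Relation.ReflTransGen (N.agglom A a).Step (N.agglom A a).m0 ν →
        ∀ μ, (∀ x, x ≠ a → (∀ i, x ≠ π i) → μ x = ν x) → μ a = 0 →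
        (∑ i, μ (π i)) = ν a → Relation.ReflTransGen N.Step N.m0 μ := by
      intro ν hν
      induction hν with
      | refl =>
        intro μ hoff hμa hsum
        apply redistribute N π hinj hloopH hn0
        · intro x hx
          by_cases hxa : x = a
          · subst hxa; rw [hm00 x ha, hμa]
          · rw [hoff x hxa hx]
            simp only [PNet.agglom, Function.update_of_ne hxa, restrictTo]
            by_cases hmem : x ∈ N.places \ ↑A
            · rw [Set.indicator_of_mem hmem]
            · rw [Set.indicator_of_notMem hmem]
              apply hm00
              intro hxP
              exact hmem ⟨hxP, fun hxA =>
                (let ⟨i, hi⟩ := (hmemA x).mp (Finset.mem_coe.mp hxA); hx i hi.symm)⟩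
        · rw [hsum]
          simp only [PNet.agglom, Function.update_self]
          exact (hsumA N.m0).symm
      | @tail b c hprev hstep ih =>
        intro μ' hoff' hμ'a hsum'
        obtain ⟨u, ⟨hu, hen'⟩, rfl⟩ := hstep
        have hPreA : ∑ i, N.Pre u (π i) ≤ b a := by
          have h2 := hen' a
          simpa only [PNet.agglom, Function.update_self, hsumA] using h2
        set μ := fun x => if x = a then 0 else
          if ∃ i, π i = x then
            N.Pre u x + (if x = π ⟨0, hn0⟩ then b a - ∑ i, N.Pre u (π i) else 0)
          else b x with hμdef
        have hμa : μ a = 0 := by simp only [hμdef, if_pos rfl]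
        have hμπ : ∀ i, μ (π i) = N.Pre u (π i) +
            (if i = ⟨0, hn0⟩ then b a - ∑ j, N.Pre u (π j) else 0) := by
          intro i
          simp only [hμdef]
          rw [if_neg (hπa i), if_pos ⟨i, rfl⟩]
          congr 1
          by_cases hiz : i = (⟨0, hn0⟩ : Fin n)
          · rw [if_pos (by rw [hiz]), if_pos hiz]
          · rw [if_neg fun hh => hiz (hinj hh), if_neg hiz]
        have hsumμ : ∑ i, μ (π i) = b a := by
          have h1 : ∑ i, μ (π i) = (∑ i, N.Pre u (π i)) +
              ∑ i : Fin n, (if i = (⟨0, hn0⟩ : Fin n) then b a - ∑ j, N.Pre u (π j) else 0) := by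
            rw [← Finset.sum_add_distrib]
            exact Finset.sum_congr rfl fun i _ => hμπ i
          rw [h1, Finset.sum_ite_eq' Finset.univ (⟨0, hn0⟩ : Fin n)
            (fun _ => b a - ∑ j, N.Pre u (π j)), if_pos (Finset.mem_univ _)]
          omega
        have hμoff : ∀ x, x ≠ a → (∀ i, x ≠ π i) → μ x = b x := by
          intro x hxa hx
          simp only [hμdef]
          rw [if_neg hxa, if_neg fun hh => (let ⟨i, hi⟩ := hh; hx i hi.symm)]
        have hμR := ih μ hμoff hμa hsumμ
        have henN : ∀ x, N.Pre u x ≤ μ x := by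
          intro x
          by_cases hxa : x = a
          · subst hxa; rw [(hpp u hu x ha).1, hμa]
          · by_cases hx : ∃ i, π i = x
            · obtain ⟨i, rfl⟩ := hx
              rw [hμπ i]
              exact Nat.le_add_right _ _
            · rw [hμoff x hxa fun i hi => hx ⟨i, hi.symm⟩]
              have h2 := hen' x
              simp only [PNet.agglom, Function.update_of_ne hxa, restrictTo] at h2
              by_cases hmem : x ∈ N.places \ ↑A
              · rwa [Set.indicator_of_mem hmem] at h2
              · have hxP : x ∉ N.places := fun hxP =>
                  hmem ⟨hxP, fun hxA => hx ((hmemA x).mp (Finset.mem_coe.mp hxA))⟩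
                rw [(hpp u hu x hxP).1]
                exact Nat.zero_le _
        have hstepN : N.Step μ (N.fire u μ) := ⟨u, ⟨hu, henN⟩, rfl⟩
        have hfire_off : ∀ x, (∀ i, x ≠ π i) → N.fire u μ x = μ' x := by
          intro x hx
          by_cases hxa : x = a
          · subst hxa
            simp only [PNet.fire]
            rw [hμa, (hpp u hu x ha).1, (hpp u hu x ha).2, hμ'a]
          · rw [hoff' x hxa hx]
            simp only [PNet.fire, PNet.agglom, Function.update_of_ne hxa, restrictTo]
            rw [hμoff x hxa hx]
            by_cases hmem : x ∈ N.places \ ↑A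
            · simp only [Set.indicator_of_mem hmem]
            · have hxP : x ∉ N.places := fun hxP =>
                hmem ⟨hxP, fun hxA =>
                  (let ⟨i, hi⟩ := (hmemA x).mp (Finset.mem_coe.mp hxA); hx i hi.symm)⟩
              simp only [Set.indicator_of_notMem hmem,
                (hpp u hu x hxP).1, (hpp u hu x hxP).2]
        have hfire_sum : ∑ i, N.fire u μ (π i) = ∑ i, μ' (π i) := by
          have h1 : ∑ i, N.fire u μ (π i)
              = (∑ i, μ (π i)) - (∑ i, N.Pre u (π i)) + ∑ i, N.Post u (π i) := by
            simp only [PNet.fire]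
            rw [Finset.sum_add_distrib, sum_sub_nat _ _ _ fun i _ => henN (π i)]
          rw [h1, hsumμ, hsum']
          simp only [PNet.fire, PNet.agglom, Function.update_self, hsumA]
        exact (hμR.tail hstepN).trans
          (redistribute N π hinj hloopH hn0 _ _ hfire_off hfire_sum)
    refine key _ h (fun x => m x + m' x) ?_ ?_ ?_
    · intro x hxa hx
      rw [Function.update_of_ne hxa]
      have hz : m' x = 0 := hm' x fun hxA =>
        (let ⟨i, hi⟩ := (hmemA x).mp (Finset.mem_coe.mp hxA); hx i hi.symm)
      show m x + m' x = m x
      omega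
    · show m a + m' a = 0
      rw [hma, hm'a]
    · rw [Function.update_self]
      refine Finset.sum_congr rfl fun i _ => ?_
      show m (π i) + m' (π i) = m' (π i)
      rw [hmπ i, Nat.zero_add]
end

section
/- Let N = (P, T, Pre, Post, m₀) be a marked Petri net, let (p, t) be a source-sink pair of N, and let N' be the net obtained from N by removing p and t. Then for every z ∈ ℕ with z ≤ m₀(p) and every marking m : P ∖ {p} → ℕ: the marking on P extending m with p ↦ z belongs to R(N) if and only if m ∈ R(N'). -/
/-- Removing a source-sink pair `(p, t)`: for every `z ≤ m₀(p)` and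
every marking `m` on `P ∖ {p}`, the marking extending `m` with `p ↦ z` is reachable
in `N` iff `m` is reachable in the reduced net `N'`. -/
theorem removeSourceSink_reach_iff {X T : Type} [DecidableEq X] (N : PNet X T)
    (hwf : N.WF) (p : X) (t : T) (hss : N.SourceSink p t)
    (z : ℕ) (hz : z ≤ N.m0 p)
    (m : X → ℕ) (hm : m ∈ ValuationOn (N.places \ {p})) :
    Function.update m p z ∈ N.R ↔ m ∈ (N.removeSourceSink p t).R := by
  obtain ⟨hpP, htT, hpostp, hprep, hpretp, hpretr, hpostt⟩ := hss
  obtain ⟨-, -, hm0, hwf4⟩ := hwf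
  constructor
  · intro h
    have key : ∀ n, n ∈ N.R → restrictTo (N.places \ {p}) n ∈ (N.removeSourceSink p t).R := by
      intro n hn
      induction hn with
      | refl => exact Relation.ReflTransGen.refl
      | tail hab hbc ih =>
        rename_i b c
        obtain ⟨u, ⟨huT, hen⟩, rfl⟩ := hbc
        by_cases hut : u = t
        · subst hut
          have heq : restrictTo (N.places \ {p}) (N.fire u b)
              = restrictTo (N.places \ {p}) b := by
            funext x
            by_cases hx : x ∈ N.places \ {p}
            · simp only [restrictTo, Set.indicator_of_mem hx, PNet.fire,
                hpretr x hx.2, hpostt x, Nat.sub_zero, Nat.add_zero]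
            · simp only [restrictTo, Set.indicator_of_notMem hx]
          rw [heq]; exact ih
        · refine ih.tail ⟨u, ⟨?_, ?_⟩, ?_⟩
          · exact ⟨huT, hut⟩
          · intro x
            by_cases hx : x ∈ N.places \ {p}
            · simpa [PNet.removeSourceSink, restrictTo, Set.indicator_of_mem hx]
                using hen x
            · simp [PNet.removeSourceSink, restrictTo, Set.indicator_of_notMem hx]
          · funext x
            by_cases hx : x ∈ N.places \ {p}
            · simp [PNet.removeSourceSink, PNet.fire, restrictTo, Set.indicator_of_mem hx]
            · simp [PNet.removeSourceSink, PNet.fire, restrictTo,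
                Set.indicator_of_notMem hx]
    have h2 := key _ h
    have heq : restrictTo (N.places \ {p}) (Function.update m p z) = m := by
      funext x
      by_cases hx : x ∈ N.places \ {p}
      · simp [restrictTo, Set.indicator_of_mem hx, Function.update_of_ne hx.2]
      · simp [restrictTo, Set.indicator_of_notMem hx, hm x hx]
    rwa [heq] at h2
  · intro h
    have key : ∀ n, n ∈ (N.removeSourceSink p t).R →
        Function.update n p (N.m0 p) ∈ N.R := by
      intro n hn
      induction hn with
      | refl =>
        have heq : Function.update (N.removeSourceSink p t).m0 p (N.m0 p) = N.m0 := by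
          funext x
          by_cases hxp : x = p
          · subst hxp; simp
          · rw [Function.update_of_ne hxp]
            by_cases hx : x ∈ N.places \ {p}
            · simp [PNet.removeSourceSink, restrictTo, Set.indicator_of_mem hx]
            · have hxP : x ∉ N.places := fun hxP => hx ⟨hxP, hxp⟩
              simp [PNet.removeSourceSink, restrictTo, Set.indicator_of_notMem hx,
                hm0 x hxP]
        rw [heq]; exact Relation.ReflTransGen.refl
      | tail hab hbc ih =>
        rename_i b c
        obtain ⟨u, ⟨huT', hen⟩, rfl⟩ := hbc
        obtain ⟨huT, hut⟩ : u ∈ N.trans ∧ u ≠ t := huT'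
        refine ih.tail ⟨u, ⟨huT, ?_⟩, ?_⟩
        · intro x
          by_cases hxp : x = p
          · subst hxp; simp [hprep u huT hut]
          · rw [Function.update_of_ne hxp]
            have hx' := hen x
            by_cases hx : x ∈ N.places \ {p}
            · simpa [PNet.removeSourceSink, restrictTo, Set.indicator_of_mem hx] using hx'
            · have hxP : x ∉ N.places := fun hxP => hx ⟨hxP, hxp⟩
              simp [(hwf4 u huT x hxP).1]
        · funext x
          by_cases hxp : x = p
          · subst hxp
            simp [PNet.fire, hprep u huT hut, hpostp u huT]
          · rw [Function.update_of_ne hxp]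
            simp only [PNet.fire, Function.update_of_ne hxp]
            by_cases hx : x ∈ N.places \ {p}
            · simp [PNet.removeSourceSink, restrictTo, Set.indicator_of_mem hx]
            · have hxP : x ∉ N.places := fun hxP => hx ⟨hxP, hxp⟩
              simp [PNet.removeSourceSink, restrictTo, Set.indicator_of_notMem hx,
                (hwf4 u huT x hxP).1, (hwf4 u huT x hxP).2]
    have h1 := key _ h
    have dec : ∀ k, Function.update m p (z + k) ∈ N.R → Function.update m p z ∈ N.R := by
      intro k
      induction k with
      | zero => intro h1; simpa using h1
      | succ k ih =>
        intro h1
        apply ih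
        refine h1.tail ⟨t, ⟨htT, ?_⟩, ?_⟩
        · intro x
          by_cases hxp : x = p
          · subst hxp; simp only [Function.update_self, hpretp]; omega
          · rw [Function.update_of_ne hxp]; simp [hpretr x hxp]
        · funext x
          by_cases hxp : x = p
          · subst hxp; simp [PNet.fire, hpretp, hpostt]
          · rw [Function.update_of_ne hxp]
            simp [PNet.fire, Function.update_of_ne hxp, hpretr x hxp, hpostt x]
    have hzk : N.m0 p = z + (N.m0 p - z) := by omega
    rw [hzk] at h1
    exact dec _ h1
end

section
/- Let (N₁, (W, S), N₂) be a net-abstraction, and let N₃ be obtained from N₂ by removing a redundant transition t of N₂ (i.e., there is a firing sequence σ of N₂ over T₂ ∖ {t} with Δ(σ) = Δ(t) that is firable from the marking Pre₂(t), and N₃ = (P₂, T₂ ∖ {t}, Pre₂, Post₂, m₀₂)). Then (N₁, (W, S), N₃) is a net-abstraction. -/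
section Aux

variable {X T : Type}

lemma fireSeq_add {N : PNet X T} {m m' : X → ℕ} {σ : List T} (d : X → ℕ)
    (h : N.FireSeq m σ m') :
    N.FireSeq (fun x => m x + d x) σ (fun x => m' x + d x) := by
  induction σ generalizing m with
  | nil => simp only [PNet.FireSeq] at h ⊢; rw [h]
  | cons u σ ih =>
    obtain ⟨⟨hu, hen⟩, hrest⟩ := h
    refine ⟨⟨hu, fun x => le_trans (hen x) (Nat.le_add_right _ _)⟩, ?_⟩
    have hih := ih hrest
    have heq : N.fire u (fun x => m x + d x) = fun x => N.fire u m x + d x := by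
      funext x
      have := hen x
      simp only [PNet.fire]
      omega
    rw [heq]
    exact hih

lemma fireSeq_delta {N : PNet X T} {m m' : X → ℕ} {σ : List T}
    (h : N.FireSeq m σ m') (x : X) :
    (m' x : ℤ) = (m x : ℤ) + N.deltaSeq σ x := by
  induction σ generalizing m with
  | nil => simp_all [PNet.FireSeq, PNet.deltaSeq]
  | cons u σ ih =>
    obtain ⟨⟨hu, hen⟩, hrest⟩ := h
    have := ih hrest
    have hpre := hen x
    simp only [PNet.deltaSeq, PNet.delta, List.map_cons, List.sum_cons] at this ⊢
    have : (m' x : ℤ) = (N.fire u m x : ℤ) + (σ.map (fun t => (N.Post t x : ℤ) - (N.Pre t x : ℤ))).sum := this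
    rw [this]
    simp only [PNet.fire]
    push_cast [Nat.sub_add_cancel]
    omega

lemma fireSeq_removeTrans {N : PNet X T} {t : T} {m m' : X → ℕ} {σ : List T}
    (havoid : ∀ u ∈ σ, u ≠ t) (h : N.FireSeq m σ m') :
    (N.removeTrans t).FireSeq m σ m' := by
  induction σ generalizing m with
  | nil => exact h
  | cons u σ ih =>
    obtain ⟨⟨hu, hen⟩, hrest⟩ := h
    exact ⟨⟨⟨hu, havoid u (by simp)⟩, hen⟩,
      ih (fun v hv => havoid v (by simp [hv])) hrest⟩

lemma fireSeq_reflTransGen {N : PNet X T} {m m' : X → ℕ} {σ : List T}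
    (h : N.FireSeq m σ m') : Relation.ReflTransGen N.Step m m' := by
  induction σ generalizing m with
  | nil => subst h; rfl
  | cons u σ ih =>
    obtain ⟨hen, hrest⟩ := h
    exact Relation.ReflTransGen.head ⟨u, hen, rfl⟩ (ih hrest)

lemma R_removeTrans {N : PNet X T} {t : T} {σ : List T}
    (hred : N.RedundantTransition t σ) : (N.removeTrans t).R = N.R := by
  obtain ⟨ht, havoid, hdelta, m₁, hfs⟩ := hred
  ext m
  constructor
  · intro h
    refine Relation.ReflTransGen.mono ?_ _ _ h
    rintro a b ⟨u, ⟨⟨hu, _⟩, hen⟩, rfl⟩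
    exact ⟨u, ⟨hu, hen⟩, rfl⟩
  · intro h
    induction h with
    | refl => exact Relation.ReflTransGen.refl
    | tail _ hs ih =>
      rename_i b c _
      obtain ⟨u, ⟨hu, hen⟩, rfl⟩ := hs
      by_cases hut : u = t
      · subst hut
        -- simulate u by σ
        have hd : b = fun x => N.Pre u x + (b x - N.Pre u x) := by
          funext x; have := hen x; omega
        have hfs' := fireSeq_add (N := N) (fun x => b x - N.Pre u x) hfs
        rw [← hd] at hfs'
        have hfs'' := fireSeq_removeTrans (fun v hv => (havoid v hv).2) hfs'
        have hfin : (fun x => m₁ x + (b x - N.Pre u x)) = N.fire u b := by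
          funext x
          have h1 := fireSeq_delta hfs x
          have h2 : N.deltaSeq σ x = N.delta u x := by rw [hdelta]
          rw [h2] at h1
          simp only [PNet.delta] at h1
          have := hen x
          simp only [PNet.fire]
          omega
        rw [hfin] at hfs''
        exact ih.trans (fireSeq_reflTransGen hfs'')
      · exact ih.tail ⟨u, ⟨⟨hu, hut⟩, hen⟩, rfl⟩

end Aux

/-- Net-abstractions are preserved by removal of a redundant
transition from the second net: if `(N₁, (W, S), N₂)` is a net-abstraction and `t` is a
redundant transition of `N₂`, then `(N₁, (W, S), N₂ ∖ {t})` is a net-abstraction. -/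
theorem netAbstraction_removeRedundantTransition {X T₁ T₂ : Type} [Countable X]
    (N₁ : PNet X T₁) (N₂ : PNet X T₂) (hwf₁ : N₁.WF) (hwf₂ : N₂.WF)
    (W : Set X) (hW : W.Finite) (S : Set (X → ℕ)) (hS : S ⊆ ValuationOn W)
    (habs : NetAbstraction N₁ W S N₂)
    (t : T₂) (σ : List T₂) (hred : N₂.RedundantTransition t σ) :
    NetAbstraction N₁ W S (N₂.removeTrans t) := by
  unfold NetAbstraction at habs ⊢
  rw [show (N₂.removeTrans t).places = N₂.places from rfl, R_removeTrans hred]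
  exact habs
end

section
/- Let (N₁, (W, S), N₂) be a net-abstraction, let p be a redundant place of N₂ with witnesses I ⊆ P₂ ∖ {p}, v : I ∪ {p} → ℕ ∖ {0} and b ∈ ℕ, and let N₃ be obtained from N₂ by removing p. Let W' = W ∪ I ∪ {p} and let S' be the set of valuations e : W' → ℕ such that the restriction of e to W lies in S and v(p)·e(p) = Σ_{q∈I} v(q)·e(q) + b. Then (N₁, (W', S'), N₃) is a net-abstraction. -/
section Aux

variable {X T : Type}

lemma restrictTo_mem_valuationOn (V : Set X) (f : X → ℕ) : restrictTo V f ∈ ValuationOn V :=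
  fun _ hx => Set.indicator_of_notMem hx f

lemma restrictTo_of_mem {V : Set X} {x : X} (hx : x ∈ V) (f : X → ℕ) :
    restrictTo V f x = f x := Set.indicator_of_mem hx f

lemma restrictTo_of_not_mem {V : Set X} {x : X} (hx : x ∉ V) (f : X → ℕ) :
    restrictTo V f x = 0 := Set.indicator_of_notMem hx f

lemma restrictTo_restrictTo {A B : Set X} (hAB : A ⊆ B) (f : X → ℕ) :
    restrictTo A (restrictTo B f) = restrictTo A f := by
  unfold restrictTo
  rw [Set.indicator_indicator, Set.inter_eq_left.mpr hAB]

/-- Reachable markings vanish outside the places. -/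
lemma mem_valuationOn_of_mem_R {N : PNet X T} (hwf : N.WF) {m : X → ℕ} (hm : m ∈ N.R) :
    m ∈ ValuationOn N.places := by
  induction hm with
  | refl => exact hwf.2.2.1
  | tail _ hstep ih =>
    obtain ⟨t, ⟨ht, _⟩, rfl⟩ := hstep
    intro x hx
    have h := hwf.2.2.2 t ht x hx
    simp [PNet.fire, ih x hx, h.1, h.2]

/-- The linear invariant of a redundant place holds on all reachable markings. -/
lemma invariant_of_redundant {N : PNet X T} {p : X} {I : Finset X} {v : X → ℕ} {b : ℕ}
    (hred : N.RedundantPlace p I v b) {m : X → ℕ} (hm : m ∈ N.R) :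
    (v p : ℤ) * (m p : ℤ) = (∑ q ∈ I, (v q : ℤ) * (m q : ℤ)) + (b : ℤ) := by
  induction hm with
  | refl =>
    have h := hred.2.2.2.2.1
    linarith
  | tail _ hstep ih =>
    rename_i c m' _
    obtain ⟨t, ⟨ht, hen⟩, rfl⟩ := hstep
    have e3 := hred.2.2.2.2.2.2 t ht
    have hcast : ∀ x, ((N.fire t c x : ℕ) : ℤ)
        = (c x : ℤ) - (N.Pre t x : ℤ) + (N.Post t x : ℤ) := by
      intro x
      have := hen x
      simp only [PNet.fire]
      omega
    have hsum : ∑ q ∈ I, (v q : ℤ) * ((N.fire t c q : ℕ) : ℤ)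
        = ∑ q ∈ I, ((v q : ℤ) * (c q : ℤ)
            + (v q : ℤ) * ((N.Post t q : ℤ) - (N.Pre t q : ℤ))) :=
      Finset.sum_congr rfl fun q _ => by rw [hcast]; ring
    rw [hsum, Finset.sum_add_distrib, hcast]
    nlinarith [ih, e3]

/-- Projection of reachability to the net with `p` removed. -/
lemma restrict_mem_R_removePlace {N : PNet X T} (p : X) {m : X → ℕ} (hm : m ∈ N.R) :
    restrictTo (N.places \ {p}) m ∈ (N.removePlace p).R := by
  set P3 := N.places \ {p} with hP3
  induction hm with
  | refl => exact Relation.ReflTransGen.refl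
  | tail _ hstep ih =>
    rename_i c m' _
    obtain ⟨t, ⟨ht, hen⟩, rfl⟩ := hstep
    refine ih.tail ⟨t, ⟨ht, ?_⟩, ?_⟩
    · intro x
      by_cases hx : x ∈ P3
      · simpa [PNet.removePlace, restrictTo_of_mem hx, restrictTo_of_mem (V := N.places \ {p}) hx] using hen x
      · simp [PNet.removePlace, restrictTo_of_not_mem hx, restrictTo_of_not_mem (V := N.places \ {p}) hx]
    · funext x
      by_cases hx : x ∈ P3
      · simp [PNet.removePlace, PNet.fire, restrictTo_of_mem hx, restrictTo_of_mem (V := N.places \ {p}) hx]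
      · simp [PNet.removePlace, PNet.fire, restrictTo_of_not_mem hx, restrictTo_of_not_mem (V := N.places \ {p}) hx]

/-- Lifting of reachability from the net with redundant `p` removed. -/
lemma exists_lift_of_mem_R_removePlace {N : PNet X T} (hwf : N.WF) {p : X} {I : Finset X}
    {v : X → ℕ} {b : ℕ} (hred : N.RedundantPlace p I v b) {m3 : X → ℕ}
    (hm3 : m3 ∈ (N.removePlace p).R) :
    ∃ m2 ∈ N.R, restrictTo (N.places \ {p}) m2 = m3 := by
  set P3 := N.places \ {p} with hP3
  induction hm3 with
  | refl => exact ⟨N.m0, Relation.ReflTransGen.refl, rfl⟩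
  | tail _ hstep ih =>
    rename_i c3 m3' _
    obtain ⟨t, ⟨ht, hen⟩, rfl⟩ := hstep
    obtain ⟨m2, hm2R, hres⟩ := ih
    have hvp : v p ≠ 0 := hred.2.2.1
    have hIP3 : ∀ q ∈ I, q ∈ P3 := fun q hq => hred.2.1 hq
    have hpre3 : ∀ x ∈ P3, N.Pre t x ≤ m2 x := by
      intro x hx
      have h := hen x
      rw [← hres] at h
      simpa [PNet.removePlace, restrictTo_of_mem hx, restrictTo_of_mem (V := N.places \ {p}) hx] using h
    have hpp : N.Pre t p ≤ m2 p := by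
        have inv := invariant_of_redundant hred hm2R
        have c2 := hred.2.2.2.2.2.1 t ht
        have hsum : ∑ q ∈ I, (v q : ℤ) * (N.Pre t q : ℤ)
            ≤ ∑ q ∈ I, (v q : ℤ) * (m2 q : ℤ) := by
          refine Finset.sum_le_sum fun q hq => ?_
          have := hpre3 q (hIP3 q hq)
          have : (N.Pre t q : ℤ) ≤ (m2 q : ℤ) := by exact_mod_cast this
          nlinarith [Int.ofNat_nonneg (v q)]
        have hmul : (v p : ℤ) * (N.Pre t p : ℤ) ≤ (v p : ℤ) * (m2 p : ℤ) := by linarith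
        have hvp' : (0 : ℤ) < (v p : ℤ) := by exact_mod_cast Nat.pos_of_ne_zero hvp
        have := le_of_mul_le_mul_left hmul hvp'
        exact_mod_cast this
    have henN : ∀ x, N.Pre t x ≤ m2 x := by
      intro x
      by_cases hxp : x = p
      · exact hxp ▸ hpp
      · by_cases hx : x ∈ N.places
        · exact hpre3 x ⟨hx, hxp⟩
        · have := hwf.2.2.2 t ht x hx
          omega
    refine ⟨N.fire t m2, hm2R.tail ⟨t, ⟨ht, henN⟩, rfl⟩, ?_⟩
    funext x
    by_cases hx : x ∈ P3
    · rw [← hres]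
      simp [PNet.removePlace, PNet.fire, restrictTo_of_mem hx, restrictTo_of_mem (V := N.places \ {p}) hx]
    · rw [← hres]
      simp [PNet.removePlace, PNet.fire, restrictTo_of_not_mem hx, restrictTo_of_not_mem (V := N.places \ {p}) hx]

end Aux

/-- Net-abstractions are preserved by removal of a redundant place
`p` of `N₂` (witnessed by `I`, `v`, `b`), the constraint system being extended with the
variables `I ∪ {p}` and the marking equation `v(p)·p = Σ_{q ∈ I} v(q)·q + b`. -/
theorem netAbstraction_removeRedundantPlace {X T₁ T₂ : Type} [Countable X] [DecidableEq X]
    (N₁ : PNet X T₁) (N₂ : PNet X T₂) (hwf₁ : N₁.WF) (hwf₂ : N₂.WF)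
    (W : Set X) (hW : W.Finite) (S : Set (X → ℕ)) (hS : S ⊆ ValuationOn W)
    (habs : NetAbstraction N₁ W S N₂)
    (p : X) (I : Finset X) (v : X → ℕ) (b : ℕ) (hred : N₂.RedundantPlace p I v b) :
    NetAbstraction N₁ (W ∪ ↑I ∪ {p})
      {e | e ∈ ValuationOn (W ∪ ↑I ∪ {p}) ∧ restrictTo W e ∈ S ∧
            v p * e p = (∑ q ∈ I, v q * e q) + b}
      (N₂.removePlace p) := by
  have hpP : p ∈ N₂.places := hred.1
  have hI : ↑I ⊆ N₂.places \ {p} := hred.2.1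
  have hvp : v p ≠ 0 := hred.2.2.1
  have hP3 : (N₂.removePlace p).places = N₂.places \ {p} := rfl
  have hP3sub : N₂.places \ {p} ⊆ N₂.places := Set.diff_subset
  have hWsub : W ⊆ W ∪ ↑I ∪ {p} := (Set.subset_union_left).trans Set.subset_union_left
  have hpW' : p ∈ W ∪ ↑I ∪ {p} := Set.mem_union_right _ rfl
  have hIW' : ∀ q ∈ I, q ∈ W ∪ ↑I ∪ {p} := fun q hq =>
    Set.mem_union_left _ (Set.mem_union_right _ hq)
  have hVeq : W ∪ ↑I ∪ {p} ∪ N₁.places ∪ (N₂.removePlace p).places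
      = W ∪ N₁.places ∪ N₂.places := by
    rw [hP3]
    ext x
    have h1 : x ∈ (↑I : Set X) → x ∈ N₂.places := fun hx => (hI hx).1
    have h2 : x = p → x ∈ N₂.places := fun hx => hx ▸ hpP
    simp only [Set.mem_union, Set.mem_diff, Set.mem_singleton_iff]
    tauto
  unfold NetAbstraction
  rw [hVeq, habs]
  refine congrArg (fun E => projTo E N₁.places) (Set.ext fun f => ?_) |>.symm
  simp only [liftTo, Set.mem_inter_iff, Set.mem_setOf_eq, hP3]
  constructor
  · rintro ⟨⟨hfV, h3R⟩, ⟨-, -, hS', hinvW⟩⟩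
    -- new ⇒ old
    rw [restrictTo_restrictTo hWsub] at hS'
    rw [restrictTo_of_mem hpW'] at hinvW
    have hinvW' : (v p : ℤ) * (f p : ℤ) = (∑ q ∈ I, (v q : ℤ) * (f q : ℤ)) + (b : ℤ) := by
      have : ∑ q ∈ I, v q * restrictTo (W ∪ ↑I ∪ {p}) f q = ∑ q ∈ I, v q * f q :=
        Finset.sum_congr rfl fun q hq => by rw [restrictTo_of_mem (hIW' q hq)]
      rw [this] at hinvW
      exact_mod_cast hinvW
    obtain ⟨m2, hm2R, hres⟩ := exists_lift_of_mem_R_removePlace hwf₂ hred h3R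
    have hm2V := mem_valuationOn_of_mem_R hwf₂ hm2R
    have hm2eq : m2 = restrictTo N₂.places f := by
      funext x
      by_cases hx2 : x ∈ N₂.places
      · rw [restrictTo_of_mem hx2]
        by_cases hxp : x = p
        · rw [hxp]
          have inv2 := invariant_of_redundant hred hm2R
          have hsq : ∑ q ∈ I, (v q : ℤ) * (m2 q : ℤ) = ∑ q ∈ I, (v q : ℤ) * (f q : ℤ) := by
            refine Finset.sum_congr rfl fun q hq => ?_
            have hq3 : q ∈ N₂.places \ {p} := hI hq
            have := congrFun hres q
            rw [restrictTo_of_mem hq3, restrictTo_of_mem hq3] at this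
            rw [this]
          rw [hsq, ← hinvW'] at inv2
          have hvp' : (0 : ℤ) < (v p : ℤ) := by exact_mod_cast Nat.pos_of_ne_zero hvp
          exact_mod_cast mul_left_cancel₀ (ne_of_gt hvp') inv2
        · have hx3 : x ∈ N₂.places \ {p} := ⟨hx2, hxp⟩
          have := congrFun hres x
          rwa [restrictTo_of_mem hx3, restrictTo_of_mem hx3] at this
      · rw [restrictTo_of_not_mem hx2]
        exact hm2V x hx2
    exact ⟨⟨hfV, hm2eq ▸ hm2R⟩, hfV, hS'⟩
  · rintro ⟨⟨hfV, h2R⟩, ⟨-, hWS⟩⟩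
    -- old ⇒ new
    have h3R : restrictTo (N₂.places \ {p}) f ∈ (N₂.removePlace p).R := by
      have := restrict_mem_R_removePlace p h2R
      rwa [restrictTo_restrictTo hP3sub] at this
    have inv := invariant_of_redundant hred h2R
    rw [restrictTo_of_mem hpP] at inv
    have hsq : ∑ q ∈ I, (v q : ℤ) * ((restrictTo N₂.places f q : ℕ) : ℤ)
        = ∑ q ∈ I, (v q : ℤ) * (f q : ℤ) := by
      refine Finset.sum_congr rfl fun q hq => ?_
      rw [restrictTo_of_mem (hI hq).1]
    rw [hsq] at inv
    refine ⟨⟨hfV, h3R⟩, hfV, restrictTo_mem_valuationOn _ _, ?_, ?_⟩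
    · rwa [restrictTo_restrictTo hWsub]
    · rw [restrictTo_of_mem hpW']
      have : ∑ q ∈ I, v q * restrictTo (W ∪ ↑I ∪ {p}) f q = ∑ q ∈ I, v q * f q :=
        Finset.sum_congr rfl fun q hq => by rw [restrictTo_of_mem (hIW' q hq)]
      rw [this]
      exact_mod_cast inv
end
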